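/- arXiv:1406.6755 — 9 statements merged into one kernel-verified Lean document; each statement's English description precedes it below -/
import Mathlib

section
/- Let G ∈ ℝ^{m×n}, b ∈ ℝ^m, A_c ∈ ℝ^{n×n}, and let H ∈ ℝ^{m×m} and γ > 0 satisfy: every entry of H + γI is nonnegative, HG = GA_c, and Hb ≤ 0. Fix p ∈ ℕ and suppose τ > 0 is such that f_i(Δt) ≥ 0 for every Δt ∈ [0,τ] and every i = 0,1,...,p, where f_i(t) = Σ_{k=i}^p ((-1)^{k-i}/k!)·binom(k,i)·γ^{k-i}·t^k. Then for every Δt ∈ [0,τ], the matrix H̃(Δt) = Σ_{i=0}^p (1/i!)·H^i·Δt^i satisfies: every entry of H̃(Δt) is nonnegative, H̃(Δt)·G = G·A_d(Δt) where A_d(Δt) = Σ_{i=0}^p (1/i!)·A_c^i·Δt^i, and H̃(Δt)·b ≤ b. -/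
open Finset

private lemma swap_sum' {M : Type*} [AddCommMonoid M] (p : ℕ) (g : ℕ → ℕ → M) :
    ∑ k ∈ range (p+1), ∑ i ∈ range (k+1), g k i
      = ∑ i ∈ range (p+1), ∑ k ∈ Finset.Icc i p, g k i := by
  apply Finset.sum_comm'
  intro k i
  simp only [mem_range, Finset.mem_Icc, Nat.lt_succ_iff]
  omega

private lemma matpow_expand' {m : ℕ} (H : Matrix (Fin m) (Fin m) ℝ) (γ : ℝ) (k : ℕ) :
    H ^ k = ∑ i ∈ range (k+1),
      ((k.choose i : ℝ) * (-γ) ^ (k - i)) • (H + γ • (1 : Matrix (Fin m) (Fin m) ℝ)) ^ i := by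
  set S := H + γ • (1 : Matrix (Fin m) (Fin m) ℝ) with hSdef
  have hH : H = S + (-γ) • (1 : Matrix (Fin m) (Fin m) ℝ) := by
    rw [hSdef, add_assoc, ← add_smul, add_neg_cancel, zero_smul, add_zero]
  have hc : Commute S ((-γ) • (1 : Matrix (Fin m) (Fin m) ℝ)) :=
    (Commute.one_right S).smul_right _
  rw [hH, hc.add_pow]
  apply Finset.sum_congr rfl
  intro i _
  rw [smul_pow, one_pow, mul_smul_comm, mul_one,
    (Nat.commute_cast (((-γ) ^ (k - i)) • S ^ i) (k.choose i)).eq,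
    ← nsmul_eq_mul, ← Nat.cast_smul_eq_nsmul ℝ, smul_smul]

/-- If `H + γI ≥ 0`, `HG = G Ac`, `Hb ≤ 0`, and the polynomials
`fᵢ` are nonnegative on `[0, τ]`, then for every `Δt ∈ [0, τ]` the matrix
`H̃(Δt) = ∑_{i=0}^p (1/i!) Hⁱ Δtⁱ` is entrywise nonnegative, satisfies
`H̃(Δt) G = G A_d(Δt)` with `A_d(Δt) = ∑_{i=0}^p (1/i!) Acⁱ Δtⁱ`, and
`H̃(Δt) b ≤ b`. -/
theorem stmt_3 {m n : ℕ} (G : Matrix (Fin m) (Fin n) ℝ) (b : Fin m → ℝ)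
    (Ac : Matrix (Fin n) (Fin n) ℝ) (H : Matrix (Fin m) (Fin m) ℝ) (γ : ℝ)
    (hγ : 0 < γ)
    (hHγ : ∀ i j, 0 ≤ (H + γ • (1 : Matrix (Fin m) (Fin m) ℝ)) i j)
    (hHG : H * G = G * Ac)
    (hHb : ∀ i, H.mulVec b i ≤ 0)
    (p : ℕ) (τ : ℝ) (hτ : 0 < τ)
    (hf : ∀ Δt ∈ Set.Icc (0 : ℝ) τ, ∀ i ≤ p,
      0 ≤ ∑ k ∈ Finset.Icc i p,
            (-1 : ℝ) ^ (k - i) / (Nat.factorial k : ℝ) * (Nat.choose k i : ℝ) *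
              γ ^ (k - i) * Δt ^ k)
    (Δt : ℝ) (hΔt : Δt ∈ Set.Icc (0 : ℝ) τ) :
    (∀ i j, 0 ≤ (∑ k ∈ Finset.range (p + 1),
        ((Nat.factorial k : ℝ)⁻¹ * Δt ^ k) • H ^ k) i j) ∧
    (∑ k ∈ Finset.range (p + 1), ((Nat.factorial k : ℝ)⁻¹ * Δt ^ k) • H ^ k) * G =
      G * ∑ k ∈ Finset.range (p + 1), ((Nat.factorial k : ℝ)⁻¹ * Δt ^ k) • Ac ^ k ∧
    ∀ i, (∑ k ∈ Finset.range (p + 1),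
        ((Nat.factorial k : ℝ)⁻¹ * Δt ^ k) • H ^ k).mulVec b i ≤ b i := by
  set S := H + γ • (1 : Matrix (Fin m) (Fin m) ℝ) with hSdef
  set F : ℕ → ℝ := fun i => ∑ k ∈ Finset.Icc i p,
      (-1 : ℝ) ^ (k - i) / (Nat.factorial k : ℝ) * (Nat.choose k i : ℝ) *
        γ ^ (k - i) * Δt ^ k with hFdef
  have hF : ∀ i ≤ p, 0 ≤ F i := fun i hi => hf Δt hΔt i hi
  -- key expansion
  have key : (∑ k ∈ Finset.range (p + 1), ((Nat.factorial k : ℝ)⁻¹ * Δt ^ k) • H ^ k)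
      = ∑ i ∈ range (p+1), F i • S ^ i := by
    calc ∑ k ∈ Finset.range (p + 1), ((Nat.factorial k : ℝ)⁻¹ * Δt ^ k) • H ^ k
        = ∑ k ∈ range (p+1), ∑ i ∈ range (k+1),
            (((Nat.factorial k : ℝ)⁻¹ * Δt ^ k) * ((k.choose i : ℝ) * (-γ) ^ (k - i))) • S ^ i := by
          apply Finset.sum_congr rfl
          intro k _
          rw [matpow_expand' H γ k, Finset.smul_sum]
          simp only [smul_smul]
          rfl
      _ = ∑ i ∈ range (p+1), ∑ k ∈ Finset.Icc i p,
            (((Nat.factorial k : ℝ)⁻¹ * Δt ^ k) * ((k.choose i : ℝ) * (-γ) ^ (k - i))) • S ^ i :=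
          swap_sum' p _
      _ = ∑ i ∈ range (p+1), F i • S ^ i := by
          apply Finset.sum_congr rfl
          intro i _
          rw [hFdef, Finset.sum_smul]
          apply Finset.sum_congr rfl
          intro k _
          congr 1
          rw [neg_pow]
          ring
  -- entrywise nonnegativity of powers of S
  have hSpow : ∀ k (i j : Fin m), 0 ≤ (S ^ k) i j := by
    intro k
    induction k with
    | zero =>
      intro i j
      rw [pow_zero]
      by_cases h : i = j <;> simp [Matrix.one_apply, h]
    | succ k ih =>
      intro i j
      rw [pow_succ, Matrix.mul_apply]
      exact Finset.sum_nonneg fun l _ => mul_nonneg (ih i l) (hHγ l j)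
  refine ⟨?_, ?_, ?_⟩
  · -- Part 1
    intro i j
    rw [key, Matrix.sum_apply]
    apply Finset.sum_nonneg
    intro k hk
    rw [Matrix.smul_apply, smul_eq_mul]
    exact mul_nonneg (hF k (Nat.lt_succ_iff.mp (mem_range.mp hk))) (hSpow k i j)
  · -- Part 2
    have hpowG : ∀ k, H ^ k * G = G * Ac ^ k := by
      intro k
      induction k with
      | zero => simp
      | succ k ih =>
        calc H ^ (k+1) * G = H ^ k * (H * G) := by rw [pow_succ, Matrix.mul_assoc]
          _ = H ^ k * G * Ac := by rw [hHG, ← Matrix.mul_assoc]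
          _ = G * Ac ^ (k+1) := by rw [ih, Matrix.mul_assoc, ← pow_succ]
    rw [Matrix.sum_mul, Matrix.mul_sum]
    apply Finset.sum_congr rfl
    intro k _
    rw [Matrix.smul_mul, hpowG k, Matrix.mul_smul]
  · -- Part 3
    have hγk : ∀ k : ℕ, (0:ℝ) ≤ γ ^ k := fun k => pow_nonneg hγ.le k
    have hSb : ∀ k (j : Fin m), (S ^ k).mulVec b j ≤ γ ^ k * b j := by
      intro k
      induction k with
      | zero => intro j; simp [Matrix.one_mulVec]
      | succ k ih =>
        intro j
        rw [pow_succ', ← Matrix.mulVec_mulVec]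
        have h1 : S.mulVec ((S ^ k).mulVec b) j ≤ S.mulVec (fun l => γ ^ k * b l) j := by
          simp only [Matrix.mulVec, dotProduct]
          apply Finset.sum_le_sum
          intro l _
          exact mul_le_mul_of_nonneg_left (ih l) (hHγ j l)
        have h2 : S.mulVec (fun l => γ ^ k * b l) j = γ ^ k * S.mulVec b j := by
          simp only [Matrix.mulVec, dotProduct, Finset.mul_sum]
          exact Finset.sum_congr rfl fun l _ => by ring
        have h3 : S.mulVec b j ≤ γ * b j := by
          rw [hSdef, Matrix.add_mulVec, Matrix.smul_mulVec, Matrix.one_mulVec]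
          have := hHb j
          simp only [Pi.add_apply, Pi.smul_apply, smul_eq_mul]
          linarith
        calc S.mulVec ((S ^ k).mulVec b) j ≤ γ ^ k * S.mulVec b j := h1.trans_eq h2
          _ ≤ γ ^ k * (γ * b j) := mul_le_mul_of_nonneg_left h3 (hγk k)
          _ = γ ^ (k + 1) * b j := by ring
    have hsum1 : ∑ i ∈ range (p+1), F i * γ ^ i = 1 := by
      have h1 : ∑ i ∈ range (p+1), F i * γ ^ i
          = ∑ i ∈ range (p+1), ∑ k ∈ Finset.Icc i p,
              ((-1 : ℝ) ^ (k - i) / (Nat.factorial k : ℝ) * (Nat.choose k i : ℝ) *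
                γ ^ (k - i) * Δt ^ k) * γ ^ i := by
        apply Finset.sum_congr rfl
        intro i _
        rw [hFdef]
        exact Finset.sum_mul _ _ _
      rw [h1, ← swap_sum' p]
      have h2 : ∀ k ∈ range (p+1), (∑ i ∈ range (k+1),
          ((-1 : ℝ) ^ (k - i) / (Nat.factorial k : ℝ) * (Nat.choose k i : ℝ) *
            γ ^ (k - i) * Δt ^ k) * γ ^ i)
          = ((Nat.factorial k : ℝ)⁻¹ * Δt ^ k) * (γ + -γ) ^ k := by
        intro k _
        rw [add_pow, Finset.mul_sum]
        apply Finset.sum_congr rfl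
        intro i _
        rw [neg_pow]
        ring
      rw [Finset.sum_congr rfl h2]
      simp only [add_neg_cancel]
      rw [Finset.sum_eq_single 0]
      · simp
      · intro k _ hk
        simp [zero_pow hk]
      · simp
    intro j
    rw [key]
    have hmv : (∑ i ∈ range (p+1), F i • S ^ i).mulVec b j
        = ∑ i ∈ range (p+1), F i * ((S ^ i).mulVec b j) := by
      simp only [Matrix.mulVec, dotProduct, Matrix.sum_apply, Matrix.smul_apply,
        smul_eq_mul, Finset.sum_mul]
      rw [Finset.sum_comm]
      exact Finset.sum_congr rfl fun i _ => by
        rw [Finset.mul_sum]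
        exact Finset.sum_congr rfl fun l _ => mul_assoc _ _ _
    rw [hmv]
    calc ∑ i ∈ range (p+1), F i * ((S ^ i).mulVec b j)
        ≤ ∑ i ∈ range (p+1), F i * (γ ^ i * b j) := by
          apply Finset.sum_le_sum
          intro i hi
          exact mul_le_mul_of_nonneg_left (hSb i j)
            (hF i (Nat.lt_succ_iff.mp (mem_range.mp hi)))
      _ = (∑ i ∈ range (p+1), F i * γ ^ i) * b j := by
          rw [Finset.sum_mul]
          exact Finset.sum_congr rfl fun i _ => by ring
      _ = b j := by rw [hsum1, one_mul]
end

section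
/- Let G ∈ ℝ^{m×n}, b ∈ ℝ^m, A_c ∈ ℝ^{n×n}, and suppose there exists a matrix H ∈ ℝ^{m×m} with all off-diagonal entries nonnegative such that HG = GA_c and Hb ≤ 0. Fix p ∈ ℕ with p ≥ 1 and define A_d(Δt) = Σ_{i=0}^p (1/i!)·A_c^i·Δt^i. Then there exists τ > 0 such that for every Δt ∈ [0,τ] and every x ∈ ℝⁿ with Gx ≤ b, we have G·A_d(Δt)·x ≤ b; that is, the p-th order Taylor approximation type discretization is invariance preserving on the polyhedron P = {x : Gx ≤ b} for all steplengths in [0,τ]. -/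
lemma poly_nonneg_near_zero : ∀ (N : ℕ) (a : ℕ → ℝ),
    (∀ k < N, (∀ j < k, a j = 0) → 0 ≤ a k) →
    ∃ τ : ℝ, 0 < τ ∧ ∀ t ∈ Set.Icc (0:ℝ) τ, 0 ≤ ∑ k ∈ Finset.range N, a k * t ^ k := by
  intro N
  induction N with
  | zero => intro a _; exact ⟨1, one_pos, by simp⟩
  | succ N ih =>
    intro a ha
    have h0 : 0 ≤ a 0 := ha 0 (Nat.succ_pos N) (by intro j hj; omega)
    by_cases hz : a 0 = 0
    · obtain ⟨τ, hτ, hb⟩ := ih (fun k => a (k + 1)) (by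
        intro k hk hprev
        exact ha (k + 1) (by omega) (by
          intro j hj
          cases j with
          | zero => exact hz
          | succ j' => exact hprev j' (by omega)))
      refine ⟨τ, hτ, fun t ht => ?_⟩
      have : ∑ k ∈ Finset.range (N + 1), a k * t ^ k
          = t * ∑ k ∈ Finset.range N, a (k + 1) * t ^ k := by
        rw [Finset.sum_range_succ', hz, Finset.mul_sum]
        simp only [zero_mul, pow_zero, mul_one, add_zero]
        exact Finset.sum_congr rfl fun k _ => by ring
      rw [this]
      exact mul_nonneg ht.1 (hb t ht)
    · have hpos : 0 < a 0 := lt_of_le_of_ne h0 (Ne.symm hz)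
      have hf : Continuous fun t : ℝ => ∑ k ∈ Finset.range (N + 1), a k * t ^ k := by
        exact continuous_finset_sum _ fun k _ => (continuous_const.mul (continuous_pow k))
      have hf0 : (∑ k ∈ Finset.range (N + 1), a k * (0:ℝ) ^ k) = a 0 := by
        rw [Finset.sum_eq_single 0]
        · simp
        · intro k _ hk; simp [zero_pow hk]
        · simp
      have hev : ∀ᶠ t in nhds (0:ℝ), 0 < ∑ k ∈ Finset.range (N + 1), a k * t ^ k := by
        have := hf.continuousAt (x := (0:ℝ))
        have h' : (0:ℝ) < ∑ k ∈ Finset.range (N + 1), a k * (0:ℝ) ^ k := by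
          rw [hf0]; exact hpos
        exact continuousAt_const.eventually_lt this h'
      rcases Metric.eventually_nhds_iff.mp hev with ⟨ε, hε, hball⟩
      refine ⟨ε / 2, by linarith, fun t ht => ?_⟩
      have : dist t 0 < ε := by
        rw [Real.dist_eq, sub_zero, abs_of_nonneg ht.1]
        linarith [ht.2]
      exact le_of_lt (hball this)

lemma uniform_tau {ι : Type*} [Fintype ι] (P : ι → ℝ → Prop)
    (h : ∀ i, ∃ τ : ℝ, 0 < τ ∧ ∀ t ∈ Set.Icc (0:ℝ) τ, P i t) :
    ∃ τ : ℝ, 0 < τ ∧ ∀ t ∈ Set.Icc (0:ℝ) τ, ∀ i, P i t := by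
  choose τ hτ hP using h
  set s : Finset ℝ := insert 1 (Finset.univ.image τ) with hs
  have hne : s.Nonempty := ⟨1, Finset.mem_insert_self _ _⟩
  refine ⟨s.min' hne, ?_, ?_⟩
  · rw [Finset.lt_min'_iff]
    intro y hy
    rcases Finset.mem_insert.mp hy with h1 | h2
    · rw [h1]; exact one_pos
    · rcases Finset.mem_image.mp h2 with ⟨i, _, rfl⟩
      exact hτ i
  · intro t ht i
    refine hP i t ⟨ht.1, ht.2.trans (Finset.min'_le _ _ ?_)⟩
    exact Finset.mem_insert_of_mem (Finset.mem_image_of_mem τ (Finset.mem_univ i))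

lemma key_lemma {m : ℕ} (H : Matrix (Fin m) (Fin m) ℝ) (c : ℝ)
    (hS : ∀ i j, 0 ≤ (H + c • 1) i j) (u : Fin m → ℝ) (hu : ∀ i, u i ≤ 0)
    (k : ℕ) (i : Fin m) (h0 : ∀ r < k, (H ^ r).mulVec u i = 0) :
    (H ^ k).mulVec u i ≤ 0 := by
  set S : Matrix (Fin m) (Fin m) ℝ := H + c • 1 with hSdef
  have hSpow : ∀ r, ∀ a b : Fin m, 0 ≤ (S ^ r) a b := by
    intro r
    induction r with
    | zero => intro a b; by_cases hab : a = b <;> simp [pow_zero, Matrix.one_apply, hab]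
    | succ r ihr =>
      intro a b
      rw [pow_succ, Matrix.mul_apply]
      exact Finset.sum_nonneg fun l _ => mul_nonneg (ihr a l) (hS l b)
  have hcomm : Commute H (c • (1 : Matrix (Fin m) (Fin m) ℝ)) :=
    (Commute.one_right H).smul_right c
  have hexp : S ^ k = ∑ r ∈ Finset.range (k + 1),
      (c ^ (k - r) * (k.choose r : ℝ)) • H ^ r := by
    rw [hSdef, hcomm.add_pow]
    refine Finset.sum_congr rfl fun r _ => ?_
    rw [smul_pow, one_pow, mul_smul_comm, mul_one, smul_mul_assoc, mul_smul]
    congr 1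
    rw [Nat.cast_smul_eq_nsmul, nsmul_eq_mul']
  have hsum : (S ^ k).mulVec u i = ∑ r ∈ Finset.range (k + 1),
      (c ^ (k - r) * (k.choose r : ℝ)) * ((H ^ r).mulVec u i) := by
    rw [hexp]
    simp only [Matrix.mulVec, dotProduct, Matrix.sum_apply, Matrix.smul_apply,
      smul_eq_mul, Finset.sum_mul]
    rw [Finset.sum_comm]
    refine Finset.sum_congr rfl fun r _ => ?_
    rw [Finset.mul_sum]
    exact Finset.sum_congr rfl fun j _ => by ring
  have heq : (H ^ k).mulVec u i = (S ^ k).mulVec u i := by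
    rw [hsum, Finset.sum_range_succ]
    have hz : ∑ r ∈ Finset.range k,
        (c ^ (k - r) * (k.choose r : ℝ)) * ((H ^ r).mulVec u i) = 0 :=
      Finset.sum_eq_zero fun r hr => by
        rw [h0 r (Finset.mem_range.mp hr), mul_zero]
    rw [hz, zero_add, Nat.sub_self, pow_zero, Nat.choose_self, Nat.cast_one, one_mul, one_mul]
  rw [heq, Matrix.mulVec, dotProduct]
  exact Finset.sum_nonpos fun j _ => mul_nonpos_of_nonneg_of_nonpos (hSpow k i j) (hu j)




/-- If there is an off-diagonal nonnegative `H` with `HG = G Ac`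
and `Hb ≤ 0`, then there is a steplength threshold `τ > 0` such that the
`p`-th order Taylor approximation type discretization is invariance preserving
on the polyhedron `{x : Gx ≤ b}` for all steplengths in `[0, τ]`. -/
theorem stmt_4 {m n : ℕ} (G : Matrix (Fin m) (Fin n) ℝ) (b : Fin m → ℝ)
    (Ac : Matrix (Fin n) (Fin n) ℝ)
    (hH : ∃ H : Matrix (Fin m) (Fin m) ℝ,
      (∀ i j, i ≠ j → 0 ≤ H i j) ∧ H * G = G * Ac ∧ ∀ i, H.mulVec b i ≤ 0)
    (p : ℕ) (hp : 1 ≤ p) :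
    ∃ τ : ℝ, 0 < τ ∧ ∀ Δt ∈ Set.Icc (0 : ℝ) τ, ∀ x : Fin n → ℝ,
      (∀ i, G.mulVec x i ≤ b i) →
      ∀ i, G.mulVec ((∑ k ∈ Finset.range (p + 1),
          ((Nat.factorial k : ℝ)⁻¹ * Δt ^ k) • Ac ^ k).mulVec x) i ≤ b i := by
  obtain ⟨H, hMetz, hHG, hHb⟩ := hH
  set c : ℝ := ∑ i, |H i i| with hc
  have hS : ∀ i j, 0 ≤ (H + c • 1) i j := by
    intro i j
    by_cases hij : i = j
    · subst hij
      simp only [Matrix.add_apply, Matrix.smul_apply, Matrix.one_apply_eq, smul_eq_mul, mul_one]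
      have h1 : |H i i| ≤ c :=
        Finset.single_le_sum (f := fun j => |H j j|) (fun j _ => abs_nonneg _) (Finset.mem_univ i)
      have h2 := neg_abs_le (H i i)
      linarith
    · simp only [Matrix.add_apply, Matrix.smul_apply, Matrix.one_apply_ne hij, smul_eq_mul,
        mul_zero, add_zero]
      exact hMetz i j hij
  -- entry zero extraction from coefficient zero
  have hfac : ∀ r : ℕ, ((r.factorial : ℝ))⁻¹ ≠ 0 :=
    fun r => inv_ne_zero (Nat.cast_ne_zero.mpr r.factorial_ne_zero)
  -- nonnegativity of the entries of the discretized H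
  have hent : ∀ ij : Fin m × Fin m, ∃ τ : ℝ, 0 < τ ∧ ∀ t ∈ Set.Icc (0:ℝ) τ,
      0 ≤ ∑ k ∈ Finset.range (p + 1),
        ((Nat.factorial k : ℝ)⁻¹ * (H ^ k) ij.1 ij.2) * t ^ k := by
    rintro ⟨i, j⟩
    apply poly_nonneg_near_zero
    intro k hk hprev
    rcases Nat.eq_zero_or_pos k with rfl | hkpos
    · simp only [Nat.factorial_zero, Nat.cast_one, inv_one, one_mul, pow_zero]
      by_cases hij : i = j <;> simp [Matrix.one_apply, hij]
    · have hzero : ∀ r < k, (H ^ r) i j = 0 := by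
        intro r hr
        exact (mul_eq_zero.mp (hprev r hr)).resolve_left (hfac r)
      have hkey := key_lemma H c hS (fun l => if l = j then (-1:ℝ) else 0)
        (fun l => by split <;> norm_num) k i (by
          intro r hr
          simp only [Matrix.mulVec, dotProduct, mul_ite, mul_neg_one, mul_zero]
          rw [Finset.sum_ite_eq' Finset.univ j]
          simp [hzero r hr])
      have : 0 ≤ (H ^ k) i j := by
        simp only [Matrix.mulVec, dotProduct, mul_ite, mul_neg_one, mul_zero] at hkey
        rw [Finset.sum_ite_eq' Finset.univ j] at hkey
        simp only [Finset.mem_univ, if_true] at hkey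
        linarith
      exact mul_nonneg (inv_nonneg.mpr (Nat.cast_nonneg _)) this
  -- the b condition polynomials
  have hbrow : ∀ i : Fin m, ∃ τ : ℝ, 0 < τ ∧ ∀ t ∈ Set.Icc (0:ℝ) τ,
      0 ≤ ∑ k ∈ Finset.range (p + 1),
        (if k = 0 then 0 else -((Nat.factorial k : ℝ)⁻¹ * (H ^ k).mulVec b i)) * t ^ k := by
    intro i
    apply poly_nonneg_near_zero
    intro k hk hprev
    rcases k with _ | k'
    · simp
    · simp only [Nat.succ_ne_zero, if_false]
      have hzero : ∀ r, 1 ≤ r → r < k' + 1 → (H ^ r).mulVec b i = 0 := by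
        intro r h1r h2r
        have := hprev r h2r
        rcases r with _ | r'
        · omega
        · simp only [Nat.succ_ne_zero, if_false, neg_eq_zero] at this
          exact (mul_eq_zero.mp this).resolve_left (hfac _)
      have hkey := key_lemma H c hS (H.mulVec b) hHb k' i (by
        intro r hr
        rw [Matrix.mulVec_mulVec, ← pow_succ]
        exact hzero (r + 1) (by omega) (by omega))
      rw [Matrix.mulVec_mulVec, ← pow_succ] at hkey
      have : 0 ≤ -((H ^ (k' + 1)).mulVec b i) := by linarith
      rw [neg_nonneg]
      exact mul_nonpos_of_nonneg_of_nonpos (inv_nonneg.mpr (Nat.cast_nonneg _)) (by linarith)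
  obtain ⟨τ1, hτ1, h1⟩ := uniform_tau _ hent
  obtain ⟨τ2, hτ2, h2⟩ := uniform_tau _ hbrow
  refine ⟨min τ1 τ2, lt_min hτ1 hτ2, ?_⟩
  intro Δt hΔt x hx i
  have hΔt1 : Δt ∈ Set.Icc (0:ℝ) τ1 := ⟨hΔt.1, hΔt.2.trans (min_le_left _ _)⟩
  have hΔt2 : Δt ∈ Set.Icc (0:ℝ) τ2 := ⟨hΔt.1, hΔt.2.trans (min_le_right _ _)⟩
  set Hd : Matrix (Fin m) (Fin m) ℝ :=
    ∑ k ∈ Finset.range (p + 1), ((Nat.factorial k : ℝ)⁻¹ * Δt ^ k) • H ^ k with hHd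
  have hGA : ∀ k : ℕ, G * Ac ^ k = H ^ k * G := by
    intro k
    induction k with
    | zero => simp
    | succ k ihk =>
      rw [pow_succ, pow_succ, ← Matrix.mul_assoc, ihk, Matrix.mul_assoc, ← hHG, ← Matrix.mul_assoc]
  have hmats : G * (∑ k ∈ Finset.range (p + 1),
      ((Nat.factorial k : ℝ)⁻¹ * Δt ^ k) • Ac ^ k) = Hd * G := by
    rw [Matrix.mul_sum, hHd, Matrix.sum_mul]
    refine Finset.sum_congr rfl fun k _ => ?_
    rw [Matrix.mul_smul, Matrix.smul_mul, hGA k]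
  have hHdpos : ∀ a b', 0 ≤ Hd a b' := by
    intro a b'
    have hthis := h1 Δt hΔt1 (a, b')
    have happ : Hd a b' = ∑ k ∈ Finset.range (p + 1),
        ((Nat.factorial k : ℝ)⁻¹ * (H ^ k) a b') * Δt ^ k := by
      simp only [hHd, Matrix.sum_apply, Matrix.smul_apply, smul_eq_mul]
      exact Finset.sum_congr rfl fun k _ => by ring
    rw [happ]; exact hthis
  have hHdmulb : Hd.mulVec b i = ∑ k ∈ Finset.range (p + 1),
      ((Nat.factorial k : ℝ)⁻¹ * Δt ^ k) * ((H ^ k).mulVec b i) := by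
    simp only [hHd, Matrix.mulVec, dotProduct, Matrix.sum_apply, Matrix.smul_apply,
      smul_eq_mul, Finset.sum_mul]
    rw [Finset.sum_comm]
    refine Finset.sum_congr rfl fun k _ => ?_
    rw [Finset.mul_sum]
    exact Finset.sum_congr rfl fun j _ => by ring
  have hb2 : Hd.mulVec b i + ∑ k ∈ Finset.range (p + 1),
      (if k = 0 then 0 else -((Nat.factorial k : ℝ)⁻¹ * (H ^ k).mulVec b i)) * Δt ^ k = b i := by
    rw [hHdmulb, ← Finset.sum_add_distrib,
      Finset.sum_eq_single_of_mem 0 (Finset.mem_range.mpr (Nat.succ_pos p))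
        (fun k _ hk => by simp only [if_neg hk]; ring)]
    simp [Matrix.one_mulVec]
  have hle : Hd.mulVec b i ≤ b i := by
    have hthis := h2 Δt hΔt2 i
    linarith
  have hmv : G.mulVec ((∑ k ∈ Finset.range (p + 1),
      ((Nat.factorial k : ℝ)⁻¹ * Δt ^ k) • Ac ^ k).mulVec x) i
      = Hd.mulVec (G.mulVec x) i := by
    rw [Matrix.mulVec_mulVec, hmats, ← Matrix.mulVec_mulVec]
  rw [hmv]
  have hstep : Hd.mulVec (G.mulVec x) i ≤ Hd.mulVec b i := by
    simp only [Matrix.mulVec, dotProduct]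
    exact Finset.sum_le_sum fun j _ => mul_le_mul_of_nonneg_left (hx j) (hHdpos i j)
  exact hstep.trans hle
end

section
/- Let G ∈ ℝ^{m×n}, b ∈ ℝ^m, A_c ∈ ℝ^{n×n}, and let H ∈ ℝ^{m×m} and γ > 0 satisfy: every entry of H + γI is nonnegative, HG = GA_c, and Hb ≤ 0. Let σ_0 = 1, σ_1, ..., σ_p ∈ ℝ and define f_i(t) = Σ_{k=i}^p (-1)^{k-i}·σ_k·binom(k,i)·γ^{k-i}·t^k for i = 0,1,...,p. Suppose Δt ≥ 0 satisfies f_i(Δt) ≥ 0 for every i = 0,1,...,p. Then the matrix H̃(Δt) = Σ_{i=0}^p σ_i·H^i·Δt^i satisfies: every entry of H̃(Δt) is nonnegative, H̃(Δt)·G = G·A_d(Δt) where A_d(Δt) = Σ_{i=0}^p σ_i·A_c^i·Δt^i, and H̃(Δt)·b ≤ b. -/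
/-- Polynomial-approximation version of Statement 3. If
`H + γI ≥ 0`, `HG = G Ac`, `Hb ≤ 0`, `σ₀ = 1`, and `fᵢ(Δt) ≥ 0` for all
`i = 0, ..., p`, then `H̃(Δt) = ∑_{i=0}^p σᵢ Hⁱ Δtⁱ` is entrywise nonnegative,
`H̃(Δt) G = G A_d(Δt)` with `A_d(Δt) = ∑_{i=0}^p σᵢ Acⁱ Δtⁱ`, and `H̃(Δt) b ≤ b`. -/
theorem stmt_6 {m n : ℕ} (G : Matrix (Fin m) (Fin n) ℝ) (b : Fin m → ℝ)
    (Ac : Matrix (Fin n) (Fin n) ℝ) (H : Matrix (Fin m) (Fin m) ℝ) (γ : ℝ)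
    (hγ : 0 < γ)
    (hHγ : ∀ i j, 0 ≤ (H + γ • (1 : Matrix (Fin m) (Fin m) ℝ)) i j)
    (hHG : H * G = G * Ac)
    (hHb : ∀ i, H.mulVec b i ≤ 0)
    (p : ℕ) (σ : ℕ → ℝ) (hσ0 : σ 0 = 1)
    (Δt : ℝ) (hΔt : 0 ≤ Δt)
    (hf : ∀ i ≤ p,
      0 ≤ ∑ k ∈ Finset.Icc i p,
            (-1 : ℝ) ^ (k - i) * σ k * (Nat.choose k i : ℝ) * γ ^ (k - i) * Δt ^ k) :
    (∀ i j, 0 ≤ (∑ k ∈ Finset.range (p + 1), (σ k * Δt ^ k) • H ^ k) i j) ∧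
    (∑ k ∈ Finset.range (p + 1), (σ k * Δt ^ k) • H ^ k) * G =
      G * ∑ k ∈ Finset.range (p + 1), (σ k * Δt ^ k) • Ac ^ k ∧
    ∀ i, (∑ k ∈ Finset.range (p + 1), (σ k * Δt ^ k) • H ^ k).mulVec b i ≤ b i := by
  set M : Matrix (Fin m) (Fin m) ℝ := H + γ • (1 : Matrix (Fin m) (Fin m) ℝ) with hM
  set c : ℕ → ℝ := fun i =>
    ∑ k ∈ Finset.Icc i p, σ k * Δt ^ k * (Nat.choose k i : ℝ) * (-γ) ^ (k - i) with hc
  -- nonnegativity of coefficients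
  have hc_nonneg : ∀ i ≤ p, 0 ≤ c i := by
    intro i hi
    have := hf i hi
    have heq : c i = ∑ k ∈ Finset.Icc i p,
        (-1 : ℝ) ^ (k - i) * σ k * (Nat.choose k i : ℝ) * γ ^ (k - i) * Δt ^ k := by
      apply Finset.sum_congr rfl
      intro k _
      rw [neg_pow]
      ring
    rw [heq]; exact this
  -- nonnegativity of powers of M
  have hMpow : ∀ k, ∀ a b', 0 ≤ (M ^ k) a b' := by
    intro k
    induction k with
    | zero => intro a b'; simp [Matrix.one_apply]; positivity
    | succ k ih =>
      intro a b'
      rw [pow_succ']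
      rw [Matrix.mul_apply]
      exact Finset.sum_nonneg fun l _ => mul_nonneg (hHγ a l) (ih l b')
  -- the key representation
  have hHrep : H = M + (-γ) • (1 : Matrix (Fin m) (Fin m) ℝ) := by
    rw [hM]; simp [neg_smul]
  have hcomm : ∀ k : ℕ, Commute M ((-γ) • (1 : Matrix (Fin m) (Fin m) ℝ)) := by
    intro _; exact (Commute.one_right M).smul_right (-γ)
  have hHpow : ∀ k : ℕ, H ^ k =
      ∑ i ∈ Finset.range (k + 1), ((-γ) ^ (k - i) * (Nat.choose k i : ℝ)) • M ^ i := by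
    intro k
    rw [hHrep, (hcomm k).add_pow]
    apply Finset.sum_congr rfl
    intro i _
    have hcast : ((Nat.choose k i : ℕ) : Matrix (Fin m) (Fin m) ℝ)
        = ((Nat.choose k i : ℕ) : ℝ) • (1 : Matrix (Fin m) (Fin m) ℝ) := by
      rw [Nat.cast_smul_eq_nsmul, nsmul_eq_mul, mul_one]
    rw [smul_pow, one_pow, mul_smul_comm, mul_one, hcast, mul_smul_comm, mul_one,
      smul_smul, mul_comm]
  have hrep : ∑ k ∈ Finset.range (p + 1), (σ k * Δt ^ k) • H ^ k
      = ∑ i ∈ Finset.range (p + 1), c i • M ^ i := by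
    have h1 : ∑ k ∈ Finset.range (p + 1), (σ k * Δt ^ k) • H ^ k
        = ∑ k ∈ Finset.range (p + 1), ∑ i ∈ Finset.range (k + 1),
            (σ k * Δt ^ k * (Nat.choose k i : ℝ) * (-γ) ^ (k - i)) • M ^ i := by
      apply Finset.sum_congr rfl
      intro k _
      rw [hHpow k, Finset.smul_sum]
      apply Finset.sum_congr rfl
      intro i _
      rw [smul_smul]
      ring_nf
    rw [h1]
    rw [Finset.sum_comm' (t' := Finset.range (p + 1)) (s' := fun i => Finset.Icc i p)
      (by intro k i; simp [Finset.mem_range, Finset.mem_Icc]; omega)]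
    apply Finset.sum_congr rfl
    intro i _
    rw [hc, ← Finset.sum_smul]
  -- sum of c i * γ ^ i = 1
  have hcsum : ∑ i ∈ Finset.range (p + 1), c i * γ ^ i = 1 := by
    have h1 : ∑ i ∈ Finset.range (p + 1), c i * γ ^ i
        = ∑ i ∈ Finset.range (p + 1), ∑ k ∈ Finset.Icc i p,
            σ k * Δt ^ k * ((Nat.choose k i : ℝ) * ((-γ) ^ (k - i) * γ ^ i)) := by
      apply Finset.sum_congr rfl
      intro i _
      rw [hc, Finset.sum_mul]
      apply Finset.sum_congr rfl
      intro k _; ring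
    rw [h1, ← Finset.sum_comm' (s := Finset.range (p + 1)) (t := fun k => Finset.range (k + 1))
      (by intro k i; simp [Finset.mem_range, Finset.mem_Icc]; omega)]
    have h2 : ∀ k ∈ Finset.range (p + 1),
        ∑ i ∈ Finset.range (k + 1),
          σ k * Δt ^ k * ((Nat.choose k i : ℝ) * ((-γ) ^ (k - i) * γ ^ i))
        = σ k * Δt ^ k * (0 : ℝ) ^ k := by
      intro k _
      rw [← Finset.mul_sum]
      congr 1
      have := add_pow γ (-γ) k
      rw [add_neg_cancel] at this
      rw [this]
      apply Finset.sum_congr rfl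
      intro i _
      ring
    rw [Finset.sum_congr rfl h2]
    rw [Finset.sum_eq_single 0]
    · simp [hσ0]
    · intro k _ hk
      rw [zero_pow hk]; ring
    · intro h; simp at h
  constructor
  · -- entrywise nonnegativity
    intro a b'
    rw [hrep, Matrix.sum_apply]
    apply Finset.sum_nonneg
    intro i hi
    rw [Matrix.smul_apply, smul_eq_mul]
    exact mul_nonneg (hc_nonneg i (by simpa using Nat.lt_succ_iff.mp (Finset.mem_range.mp hi)))
      (hMpow i a b')
  have hpowG : ∀ k : ℕ, H ^ k * G = G * Ac ^ k := by
    intro k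
    induction k with
    | zero => simp
    | succ k ih =>
      rw [pow_succ, pow_succ, Matrix.mul_assoc, hHG, ← Matrix.mul_assoc, ih, Matrix.mul_assoc]
  constructor
  · rw [Matrix.sum_mul, Matrix.mul_sum]
    apply Finset.sum_congr rfl
    intro k _
    rw [Matrix.smul_mul, Matrix.mul_smul, hpowG k]
  · -- H̃ b ≤ b
    intro j
    have hMb : ∀ k, ∀ j, (M ^ k).mulVec b j ≤ γ ^ k * b j := by
      intro k
      induction k with
      | zero => intro j; simp [Matrix.one_mulVec]
      | succ k ih =>
        intro j
        rw [pow_succ', ← Matrix.mulVec_mulVec]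
        calc M.mulVec ((M ^ k).mulVec b) j
            = ∑ l, M j l * ((M ^ k).mulVec b l) := by
              simp [Matrix.mulVec, dotProduct]
          _ ≤ ∑ l, M j l * (γ ^ k * b l) := by
              apply Finset.sum_le_sum
              intro l _
              exact mul_le_mul_of_nonneg_left (ih l) (hHγ j l)
          _ = γ ^ k * (M.mulVec b j) := by
              simp [Matrix.mulVec, dotProduct, Finset.mul_sum]
              apply Finset.sum_congr rfl
              intro l _; ring
          _ ≤ γ ^ k * (γ * b j) := by
              apply mul_le_mul_of_nonneg_left _ (pow_nonneg hγ.le k)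
              have : M.mulVec b j = H.mulVec b j + γ * b j := by
                rw [hM, Matrix.add_mulVec, Matrix.smul_mulVec, Matrix.one_mulVec]
                simp
              rw [this]
              linarith [hHb j]
          _ = γ ^ (k + 1) * b j := by ring
    have hsum_mulVec : (∑ i ∈ Finset.range (p + 1), c i • M ^ i).mulVec b j
        = ∑ i ∈ Finset.range (p + 1), c i * ((M ^ i).mulVec b j) := by
      simp [Matrix.mulVec, dotProduct, Matrix.sum_apply, Finset.sum_mul,
        Finset.mul_sum]
      rw [Finset.sum_comm]
      apply Finset.sum_congr rfl
      intro i _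
      apply Finset.sum_congr rfl
      intro l _; ring
    rw [hrep, hsum_mulVec]
    calc ∑ i ∈ Finset.range (p + 1), c i * ((M ^ i).mulVec b j)
        ≤ ∑ i ∈ Finset.range (p + 1), c i * (γ ^ i * b j) := by
          apply Finset.sum_le_sum
          intro i hi
          exact mul_le_mul_of_nonneg_left (hMb i j)
            (hc_nonneg i (Nat.lt_succ_iff.mp (Finset.mem_range.mp hi)))
      _ = (∑ i ∈ Finset.range (p + 1), c i * γ ^ i) * b j := by
          rw [Finset.sum_mul]
          apply Finset.sum_congr rfl
          intro i _; ring
      _ = b j := by rw [hcsum, one_mul]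
end

section
/- Let G ∈ ℝ^{m×n}, b ∈ ℝ^m, A_c ∈ ℝ^{n×n}, and suppose there exists a matrix H ∈ ℝ^{m×m} with every entry nonnegative such that HG = GA_c and Hb ≤ 0. Then for every p ∈ ℕ, every Δt ≥ 0, and every x ∈ ℝⁿ with Gx ≤ b, we have G·(Σ_{i=0}^p (1/i!)·A_c^i·Δt^i)·x ≤ b. In other words, if the optimal γ in the invariance condition is nonpositive, the steplength threshold for invariance preserving of Taylor approximation type discretization methods on the polyhedron P = {x : Gx ≤ b} is infinite. -/
lemma pow_entry_nonneg {m : ℕ} (H : Matrix (Fin m) (Fin m) ℝ)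
    (hH : ∀ i j, 0 ≤ H i j) : ∀ k i j, 0 ≤ (H ^ k) i j := by
  intro k
  induction k with
  | zero =>
      intro i j
      simp [Matrix.one_apply]
      split <;> norm_num
  | succ k ih =>
      intro i j
      rw [pow_succ, Matrix.mul_apply]
      exact Finset.sum_nonneg fun l _ => mul_nonneg (ih i l) (hH l j)

lemma mulVec_mono {m : ℕ} (M : Matrix (Fin m) (Fin m) ℝ)
    (hM : ∀ i j, 0 ≤ M i j) (u v : Fin m → ℝ) (huv : ∀ i, u i ≤ v i) :
    ∀ i, M.mulVec u i ≤ M.mulVec v i := by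
  intro i
  simp only [Matrix.mulVec, dotProduct]
  exact Finset.sum_le_sum fun j _ => mul_le_mul_of_nonneg_left (huv j) (hM i j)

lemma mulVec_nonpos {m : ℕ} (M : Matrix (Fin m) (Fin m) ℝ)
    (hM : ∀ i j, 0 ≤ M i j) (u : Fin m → ℝ) (hu : ∀ i, u i ≤ 0) :
    ∀ i, M.mulVec u i ≤ 0 := by
  intro i
  simp only [Matrix.mulVec, dotProduct]
  exact Finset.sum_nonpos fun j _ => mul_nonpos_of_nonneg_of_nonpos (hM i j) (hu j)

lemma sum_mulVec' {m n : ℕ} {α : Type*} [DecidableEq α] (s : Finset α)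
    (M : α → Matrix (Fin m) (Fin n) ℝ) (x : Fin n → ℝ) :
    (∑ k ∈ s, M k).mulVec x = ∑ k ∈ s, (M k).mulVec x := by
  induction s using Finset.induction with
  | empty => simp [Matrix.mulVec]
  | insert _ _ h ih =>
      rw [Finset.sum_insert h, Finset.sum_insert h, Matrix.add_mulVec, ih]

/-- If there is an entrywise nonnegative `H` with `HG = G Ac` and
`Hb ≤ 0`, then Taylor approximation type discretizations of every order `p` are
invariance preserving on `{x : Gx ≤ b}` for every steplength `Δt ≥ 0` (infinite
steplength threshold). -/
theorem stmt_10 {m n : ℕ} (G : Matrix (Fin m) (Fin n) ℝ) (b : Fin m → ℝ)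
    (Ac : Matrix (Fin n) (Fin n) ℝ)
    (hH : ∃ H : Matrix (Fin m) (Fin m) ℝ,
      (∀ i j, 0 ≤ H i j) ∧ H * G = G * Ac ∧ ∀ i, H.mulVec b i ≤ 0) :
    ∀ p : ℕ, ∀ Δt : ℝ, 0 ≤ Δt → ∀ x : Fin n → ℝ,
      (∀ i, G.mulVec x i ≤ b i) →
      ∀ i, G.mulVec ((∑ k ∈ Finset.range (p + 1),
          ((Nat.factorial k : ℝ)⁻¹ * Δt ^ k) • Ac ^ k).mulVec x) i ≤ b i := by
  obtain ⟨H, hHpos, hcomm, hHb⟩ := hH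
  intro p Δt hΔt x hx i
  have hpowcomm : ∀ k : ℕ, H ^ k * G = G * Ac ^ k := by
    intro k
    induction k with
    | zero => simp
    | succ k ih =>
        rw [pow_succ, pow_succ, Matrix.mul_assoc, hcomm, ← Matrix.mul_assoc, ih,
          Matrix.mul_assoc]
  have key : G.mulVec ((∑ k ∈ Finset.range (p + 1),
      ((Nat.factorial k : ℝ)⁻¹ * Δt ^ k) • Ac ^ k).mulVec x)
      = ∑ k ∈ Finset.range (p + 1),
        ((Nat.factorial k : ℝ)⁻¹ * Δt ^ k) • (H ^ k).mulVec (G.mulVec x) := by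
    rw [Matrix.mulVec_mulVec, Matrix.mul_sum, sum_mulVec']
    apply Finset.sum_congr rfl
    intro k _
    rw [Matrix.mul_smul, ← hpowcomm, Matrix.smul_mulVec, Matrix.mulVec_mulVec]
  rw [key]
  have hval : (∑ k ∈ Finset.range (p + 1),
      ((Nat.factorial k : ℝ)⁻¹ * Δt ^ k) • (H ^ k).mulVec (G.mulVec x)) i
      = ∑ k ∈ Finset.range (p + 1),
        ((Nat.factorial k : ℝ)⁻¹ * Δt ^ k) * (H ^ k).mulVec (G.mulVec x) i := by
    simp [Finset.sum_apply]
  rw [hval, Finset.sum_range_succ']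
  have h0 : ((Nat.factorial 0 : ℝ)⁻¹ * Δt ^ 0) * (H ^ 0).mulVec (G.mulVec x) i ≤ b i := by
    simpa [Matrix.one_mulVec] using hx i
  have hrest : ∀ k, ((Nat.factorial (k+1) : ℝ)⁻¹ * Δt ^ (k+1)) *
      (H ^ (k+1)).mulVec (G.mulVec x) i ≤ 0 := by
    intro k
    apply mul_nonpos_of_nonneg_of_nonpos
    · positivity
    · have h1 : (H ^ (k+1)).mulVec (G.mulVec x) i ≤ (H ^ (k+1)).mulVec b i :=
        mulVec_mono _ (pow_entry_nonneg H hHpos (k+1)) _ _ hx i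
      have h2 : (H ^ (k+1)).mulVec b i ≤ 0 := by
        have : (H ^ (k+1)).mulVec b = (H ^ k).mulVec (H.mulVec b) := by
          rw [pow_succ, ← Matrix.mulVec_mulVec]
        rw [this]
        exact mulVec_nonpos _ (pow_entry_nonneg H hHpos k) _ hHb i
      linarith
  calc (∑ k ∈ Finset.range p, ((Nat.factorial (k+1) : ℝ)⁻¹ * Δt ^ (k+1)) *
        (H ^ (k+1)).mulVec (G.mulVec x) i)
        + ((Nat.factorial 0 : ℝ)⁻¹ * Δt ^ 0) * (H ^ 0).mulVec (G.mulVec x) i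
      ≤ 0 + b i :=
        add_le_add (Finset.sum_nonpos fun k _ => hrest k) h0
    _ = b i := by ring
end

section
/- Let G ∈ ℝ^{m×n}, b ∈ ℝ^m, A_c ∈ ℝ^{n×n}, γ > 0, and suppose there exists H ∈ ℝ^{m×m} such that every entry of H + γI is nonnegative, HG = GA_c, and Hb ≤ 0. Then for every x ∈ ℝⁿ with Gx ≤ b, we have G·(x + γ^{-1}·A_c·x) ≤ b; that is, (I + γ^{-1}A_c)·P ⊆ P for the polyhedron P = {x : Gx ≤ b}. -/
/-- If `γ > 0` and some `H` satisfies `H + γI ≥ 0`, `HG = G Ac`,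
and `Hb ≤ 0`, then `(I + γ⁻¹ Ac) x ∈ P` for every `x ∈ P = {x : Gx ≤ b}`. -/
theorem stmt_11 {m n : ℕ} (G : Matrix (Fin m) (Fin n) ℝ) (b : Fin m → ℝ)
    (Ac : Matrix (Fin n) (Fin n) ℝ) (γ : ℝ) (hγ : 0 < γ)
    (hH : ∃ H : Matrix (Fin m) (Fin m) ℝ,
      (∀ i j, 0 ≤ (H + γ • (1 : Matrix (Fin m) (Fin m) ℝ)) i j) ∧
        H * G = G * Ac ∧ ∀ i, H.mulVec b i ≤ 0) :
    ∀ x : Fin n → ℝ, (∀ i, G.mulVec x i ≤ b i) →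
      ∀ i, G.mulVec (x + γ⁻¹ • Ac.mulVec x) i ≤ b i := by
  obtain ⟨H, hpos, hcomm, hHb⟩ := hH
  intro x hx i
  set y : Fin m → ℝ := G.mulVec x with hy
  have hGAc : G.mulVec (Ac.mulVec x) = H.mulVec y := by
    rw [hy, Matrix.mulVec_mulVec, Matrix.mulVec_mulVec, hcomm]
  have key : 0 ≤ ∑ j, (H + γ • (1 : Matrix (Fin m) (Fin m) ℝ)) i j * (b j - y j) := by
    apply Finset.sum_nonneg
    intro j _
    exact mul_nonneg (hpos i j) (by linarith [hx j])
  have expand : ∑ j, (H + γ • (1 : Matrix (Fin m) (Fin m) ℝ)) i j * (b j - y j)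
      = (H.mulVec b i + γ * b i) - (H.mulVec y i + γ * y i) := by
    simp only [Matrix.mulVec, dotProduct, mul_sub, Finset.sum_sub_distrib,
      Matrix.add_apply, Matrix.smul_apply, Matrix.one_apply, add_mul, smul_eq_mul]
    rw [Finset.sum_add_distrib, Finset.sum_add_distrib]
    have h1 : ∑ j, (if i = j then γ * (1:ℝ) else γ * 0) * b j = γ * b i := by
      simp [Finset.sum_ite_eq]
    have h2 : ∑ j, (if i = j then γ * (1:ℝ) else γ * 0) * y j = γ * y i := by
      simp [Finset.sum_ite_eq]
    simp only [mul_ite, mul_one, mul_zero] at *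
    rw [h1, h2]
  rw [expand] at key
  have hHy : H.mulVec y i ≤ γ * (b i - y i) := by
    have := hHb i; nlinarith
  have : G.mulVec (x + γ⁻¹ • Ac.mulVec x) i = y i + γ⁻¹ * H.mulVec y i := by
    rw [Matrix.mulVec_add, Matrix.mulVec_smul, ← hGAc]
    simp [hy]
  rw [this]
  have hγ' : γ⁻¹ * H.mulVec y i ≤ γ⁻¹ * (γ * (b i - y i)) :=
    mul_le_mul_of_nonneg_left hHy (by positivity)
  rw [← mul_assoc, inv_mul_cancel₀ hγ.ne', one_mul] at hγ'
  linarith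
end

section
/- Let G ∈ ℝ^{m×n}, b ∈ ℝ^m, A_c ∈ ℝ^{n×n}, γ > 0, and suppose the polyhedron P = {x ∈ ℝⁿ : Gx ≤ b} is nonempty. Then the following are equivalent: (i) there exists H ∈ ℝ^{m×m} such that every entry of H + γI is nonnegative, HG = GA_c, and Hb ≤ 0; (ii) (I + γ^{-1}A_c)·x ∈ P for every x ∈ P. -/
open Finset

open scoped RealInnerProductSpace

/-- Carathéodory-type lemma for cones: any nonnegative combination supported on `s`
can be rewritten as a nonnegative combination supported on a subset on which the
vectors are linearly independent. -/
lemma farkas_cara {N k : ℕ} (v : Fin k → EuclideanSpace ℝ (Fin N)) (s : Finset (Fin k)) :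
    ∀ y : Fin k → ℝ, (∀ i, 0 ≤ y i) → (∀ i ∉ s, y i = 0) →
    ∃ (t : Finset (Fin k)) (z : Fin k → ℝ), t ⊆ s ∧
      LinearIndependent ℝ (fun i : t => v i) ∧ (∀ i, 0 ≤ z i) ∧ (∀ i ∉ t, z i = 0) ∧
      ∑ i, z i • v i = ∑ i, y i • v i := by
  induction s using Finset.strongInduction with
  | _ s ih =>
  intro y hy hsupp
  by_cases hli : LinearIndependent ℝ (fun i : s => v i)
  · exact ⟨s, y, subset_rfl, hli, hy, hsupp, rfl⟩
  · obtain ⟨g, hg0, i0, hi0⟩ := Fintype.not_linearIndependent_iff.mp hli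
    -- extend g to Fin k by zero
    set c : Fin k → ℝ := fun i => if h : i ∈ s then g ⟨i, h⟩ else 0 with hc
    have hcsum : ∑ i, c i • v i = 0 := by
      rw [← Finset.sum_subset (Finset.subset_univ s)
        (by intro i _ hi; simp [hc, hi])]
      rw [← Finset.sum_attach s (fun i => c i • v i)]
      simpa [hc] using hg0
    have hcne : ∃ i ∈ s, c i ≠ 0 := ⟨i0, i0.2, by simpa [hc, i0.2] using hi0⟩
    -- choose a sign so that some coefficient is positive
    obtain ⟨c', hc'sum, hc'supp, hc'pos⟩ :
        ∃ c' : Fin k → ℝ, ∑ i, c' i • v i = 0 ∧ (∀ i ∉ s, c' i = 0) ∧ ∃ i ∈ s, 0 < c' i := by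
      obtain ⟨i1, hi1s, hi1⟩ := hcne
      rcases lt_or_gt_of_ne hi1 with hneg | hpos
      · refine ⟨-c, by simpa using congrArg Neg.neg hcsum, fun i hi => by simp [hc, hi], i1, hi1s,
          by simpa using hneg⟩
      · exact ⟨c, hcsum, fun i hi => by simp [hc, hi], i1, hi1s, hpos⟩
    set P := s.filter (fun i => 0 < c' i) with hP
    have hPne : P.Nonempty := by
      obtain ⟨i1, h1, h2⟩ := hc'pos
      exact ⟨i1, Finset.mem_filter.mpr ⟨h1, h2⟩⟩
    obtain ⟨j, hjP, hjmin⟩ := Finset.exists_min_image P (fun i => y i / c' i) hPne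
    have hjs : j ∈ s := (Finset.mem_filter.mp hjP).1
    have hjc : 0 < c' j := (Finset.mem_filter.mp hjP).2
    set t0 := y j / c' j with ht0
    have ht0nn : 0 ≤ t0 := div_nonneg (hy j) hjc.le
    set z : Fin k → ℝ := fun i => y i - t0 * c' i with hz
    have hznn : ∀ i, 0 ≤ z i := by
      intro i
      rcases le_or_gt (c' i) 0 with h | h
      · have : t0 * c' i ≤ 0 := mul_nonpos_of_nonneg_of_nonpos ht0nn h
        simp only [hz]; linarith [hy i]
      · have hiP : i ∈ P := by
          by_cases his : i ∈ s
          · exact Finset.mem_filter.mpr ⟨his, h⟩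
          · exact absurd (hc'supp i his) (ne_of_gt h)
        have := hjmin i hiP
        rw [div_le_div_iff₀ hjc h] at this
        have h2 : t0 * c' i ≤ y i := by
          rw [ht0, div_mul_eq_mul_div, div_le_iff₀ hjc]
          linarith
        simp only [hz]; linarith
    have hzj : z j = 0 := by
      simp only [hz, ht0]
      field_simp
      ring
    have hzsupp : ∀ i ∉ s.erase j, z i = 0 := by
      intro i hi
      by_cases his : i ∈ s
      · have : i = j := by
          by_contra hne
          exact hi (Finset.mem_erase.mpr ⟨hne, his⟩)
        rw [this]; exact hzj
      · simp only [hz, hsupp i his, hc'supp i his, mul_zero, sub_zero]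
    have hzsum : ∑ i, z i • v i = ∑ i, y i • v i := by
      have : ∑ i, (t0 * c' i) • v i = 0 := by
        simp only [mul_smul, ← Finset.smul_sum, hc'sum, smul_zero]
      simp only [hz, sub_smul, Finset.sum_sub_distrib, this, sub_zero]
    obtain ⟨t, w, hts, hli', hw⟩ := ih (s.erase j) (Finset.erase_ssubset hjs) z hznn hzsupp
    exact ⟨t, w, hts.trans (Finset.erase_subset _ _), hli', hw.1, hw.2.1, hw.2.2.trans hzsum⟩

/-- The part of the finitely generated cone supported on a linearly independent subset is
closed. -/
lemma farkas_closed_piece {N k : ℕ} (v : Fin k → EuclideanSpace ℝ (Fin N)) (t : Finset (Fin k))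
    (hli : LinearIndependent ℝ (fun i : t => v i)) :
    IsClosed {x : EuclideanSpace ℝ (Fin N) |
      ∃ y : Fin k → ℝ, (∀ i, 0 ≤ y i) ∧ (∀ i ∉ t, y i = 0) ∧ x = ∑ i, y i • v i} := by
  classical
  set f : ({ x // x ∈ t } → ℝ) →ₗ[ℝ] EuclideanSpace ℝ (Fin N) :=
    Fintype.linearCombination ℝ (fun i : t => v i) with hf
  have hker : LinearMap.ker f = ⊥ := by
    rw [LinearMap.ker_eq_bot']
    intro g hg
    have := Fintype.linearIndependent_iff.mp hli g (by
      simpa [hf, Fintype.linearCombination_apply] using hg)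
    funext i; exact this i
  have hclosed : Topology.IsClosedEmbedding f := LinearMap.isClosedEmbedding_of_injective hker
  have horth : IsClosed {g : { x // x ∈ t } → ℝ | ∀ i, 0 ≤ g i} := by
    have : {g : { x // x ∈ t } → ℝ | ∀ i, 0 ≤ g i} =
        Set.pi Set.univ (fun _ => Set.Ici (0:ℝ)) := by
      ext g
      simp only [Set.mem_pi, Set.mem_univ, forall_true_left, Set.mem_Ici, Set.mem_setOf_eq]
    rw [this]
    exact isClosed_set_pi (fun i _ => isClosed_Ici)
  have himg : {x : EuclideanSpace ℝ (Fin N) |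
      ∃ y : Fin k → ℝ, (∀ i, 0 ≤ y i) ∧ (∀ i ∉ t, y i = 0) ∧ x = ∑ i, y i • v i} =
      f '' {g : { x // x ∈ t } → ℝ | ∀ i, 0 ≤ g i} := by
    ext x
    constructor
    · rintro ⟨y, hy, hsupp, rfl⟩
      refine ⟨fun i => y i, fun i => hy i, ?_⟩
      simp only [hf, Fintype.linearCombination_apply]
      rw [← Finset.sum_subset (Finset.subset_univ t)
        (by intro i _ hi; simp [hsupp i hi])]
      rw [← Finset.sum_attach t (fun i => y i • v i)]
      rfl
    · rintro ⟨g, hg, rfl⟩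
      refine ⟨fun i => if h : i ∈ t then g ⟨i, h⟩ else 0, ?_, ?_, ?_⟩
      · intro i; by_cases h : i ∈ t
        · simpa [h] using hg ⟨i, h⟩
        · simp [h]
      · intro i hi; simp [hi]
      · simp only [hf, Fintype.linearCombination_apply]
        rw [← Finset.sum_subset (Finset.subset_univ t)
          (by intro i _ hi; simp [hi])]
        rw [← Finset.sum_attach t (fun i => (if h : i ∈ t then g ⟨i, h⟩ else 0) • v i)]
        exact Finset.sum_congr rfl (fun i _ => by simp [i.2])
  rw [himg]
  exact hclosed.isClosedMap _ horth

/-- A finitely generated cone is closed. -/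
lemma farkas_cone_closed {N k : ℕ} (v : Fin k → EuclideanSpace ℝ (Fin N)) :
    IsClosed {x : EuclideanSpace ℝ (Fin N) |
      ∃ y : Fin k → ℝ, (∀ i, 0 ≤ y i) ∧ x = ∑ i, y i • v i} := by
  classical
  have heq : {x : EuclideanSpace ℝ (Fin N) |
      ∃ y : Fin k → ℝ, (∀ i, 0 ≤ y i) ∧ x = ∑ i, y i • v i} =
      ⋃ (t : Finset (Fin k)), ⋃ (_ : LinearIndependent ℝ (fun i : t => v i)),
        {x : EuclideanSpace ℝ (Fin N) |
          ∃ y : Fin k → ℝ, (∀ i, 0 ≤ y i) ∧ (∀ i ∉ t, y i = 0) ∧ x = ∑ i, y i • v i} := by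
    ext x
    simp only [Set.mem_setOf_eq, Set.mem_iUnion]
    constructor
    · rintro ⟨y, hy, rfl⟩
      obtain ⟨t, z, _, hli, hz, hzsupp, hsum⟩ :=
        farkas_cara v Finset.univ y hy (by simp)
      exact ⟨t, hli, z, hz, hzsupp, hsum.symm⟩
    · rintro ⟨t, hli, y, hy, _, rfl⟩
      exact ⟨y, hy, rfl⟩
  rw [heq]
  refine isClosed_iUnion_of_finite (fun t => ?_)
  exact isClosed_iUnion_of_finite (fun hli => farkas_closed_piece v t hli)

/-- Homogeneous Farkas lemma. -/
lemma farkas_cone {N k : ℕ} (v : Fin k → EuclideanSpace ℝ (Fin N))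
    (c : EuclideanSpace ℝ (Fin N))
    (h : ∀ z : EuclideanSpace ℝ (Fin N), (∀ i, ⟪v i, z⟫ ≤ 0) → ⟪c, z⟫ ≤ 0) :
    ∃ y : Fin k → ℝ, (∀ i, 0 ≤ y i) ∧ c = ∑ i, y i • v i := by
  classical
  by_contra hcon
  set K : ConvexCone ℝ (EuclideanSpace ℝ (Fin N)) :=
    { carrier := {x : EuclideanSpace ℝ (Fin N) |
        ∃ y : Fin k → ℝ, (∀ i, 0 ≤ y i) ∧ x = ∑ i, y i • v i}
      smul_mem' := by
        rintro a ha x ⟨y, hy, rfl⟩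
        exact ⟨fun i => a * y i, fun i => mul_nonneg ha.le (hy i), by
          simp [Finset.smul_sum, mul_smul]⟩
      add_mem' := by
        rintro x ⟨y, hy, rfl⟩ x' ⟨y', hy', rfl⟩
        exact ⟨fun i => y i + y' i, fun i => add_nonneg (hy i) (hy' i), by
          simp [add_smul, Finset.sum_add_distrib]⟩ } with hK
  have hne : (K : Set (EuclideanSpace ℝ (Fin N))).Nonempty :=
    ⟨0, ⟨fun _ => 0, fun _ => le_rfl, by simp⟩⟩
  have hcl : IsClosed (K : Set (EuclideanSpace ℝ (Fin N))) := farkas_cone_closed v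
  have hcK : c ∉ K := by
    intro hc
    obtain ⟨y, hy, rfl⟩ := hc
    exact hcon ⟨y, hy, rfl⟩
  obtain ⟨z, hz1, hz2⟩ : ∃ z, (∀ x ∈ K, 0 ≤ ⟪x, z⟫) ∧ ⟪z, c⟫ < 0 := by
    let C : ProperCone ℝ (EuclideanSpace ℝ (Fin N)) :=
      { carrier := K
        zero_mem' := ⟨fun _ => 0, fun _ => le_rfl, by simp⟩
        add_mem' := fun ha hb => K.add_mem ha hb
        smul_mem' := by
          rintro ⟨a, ha⟩ x ⟨y, hy, rfl⟩
          exact ⟨fun i => a * y i, fun i => mul_nonneg ha (hy i), by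
            simp [Finset.smul_sum, mul_smul]⟩
        isClosed' := hcl }
    obtain ⟨z, h1, h2⟩ := ProperCone.hyperplane_separation' C (x₀ := c) hcK
    exact ⟨z, h1, by rwa [real_inner_comm]⟩
  have hvz : ∀ i, ⟪v i, -z⟫ ≤ 0 := by
    intro i
    have hvK : v i ∈ K := ⟨fun j => if j = i then 1 else 0, fun j => by positivity, by simp⟩
    have := hz1 (v i) hvK
    rw [inner_neg_right]
    linarith
  have := h (-z) hvz
  rw [inner_neg_right] at this
  rw [real_inner_comm] at hz2
  linarith

/-- Inner product of two `snoc`s in Euclidean space. -/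
lemma farkas_inner_snoc {N : ℕ} (u w : Fin N → ℝ) (a e : ℝ) :
    @inner ℝ (EuclideanSpace ℝ (Fin (N+1))) _ (WithLp.toLp 2 (Fin.snoc u a)) (WithLp.toLp 2 (Fin.snoc w e))
      = (∑ j, u j * w j) + a * e := by
  simp [PiLp.inner_apply, RCLike.inner_apply, Fin.sum_univ_castSucc, mul_comm]

/-- Affine Farkas lemma. -/
lemma farkas_affine {m n : ℕ} (G : Matrix (Fin m) (Fin n) ℝ) (b : Fin m → ℝ)
    (c : Fin n → ℝ) (d : ℝ)
    (hP : ∃ x : Fin n → ℝ, ∀ i, G.mulVec x i ≤ b i)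
    (h : ∀ x : Fin n → ℝ, (∀ i, G.mulVec x i ≤ b i) → ∑ j, c j * x j ≤ d) :
    ∃ lam : Fin m → ℝ, (∀ i, 0 ≤ lam i) ∧ (∀ j, ∑ i, lam i * G i j = c j) ∧
      ∑ i, lam i * b i ≤ d := by
  classical
  -- the homogenized generators
  set v : Fin (m+1) → EuclideanSpace ℝ (Fin (n+1)) :=
    Fin.snoc (fun i => WithLp.toLp 2 (Fin.snoc (G i) (-b i) : Fin (n+1) → ℝ))
      (WithLp.toLp 2 (Fin.snoc (fun _ => 0) (-1))) with hv
  set c' : EuclideanSpace ℝ (Fin (n+1)) := WithLp.toLp 2 (Fin.snoc c (-d) : Fin (n+1) → ℝ) with hc'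
  have key : ∀ z : EuclideanSpace ℝ (Fin (n+1)), (∀ i, ⟪v i, z⟫ ≤ 0) → ⟪c', z⟫ ≤ 0 := by
    intro z hz
    set x : Fin n → ℝ := fun j => z (Fin.castSucc j) with hx
    set t : ℝ := z (Fin.last n) with ht
    have hzeq : WithLp.toLp 2 (Fin.snoc x t : Fin (n+1) → ℝ) = z := by
      ext j
      refine Fin.lastCases ?_ ?_ j
      · simp [hx, ht]
      · intro i; simp [hx, ht]
    have hrows : ∀ i : Fin m, ∑ j, G i j * x j ≤ b i * t := by
      intro i
      have h0 := hz (Fin.castSucc i)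
      rw [hv, ← hzeq] at h0
      simp only [Fin.snoc_castSucc] at h0
      rw [farkas_inner_snoc] at h0
      linarith
    have htnn : 0 ≤ t := by
      have h0 := hz (Fin.last m)
      rw [hv, ← hzeq] at h0
      simp only [Fin.snoc_last] at h0
      rw [farkas_inner_snoc] at h0
      simp only [zero_mul, Finset.sum_const_zero, zero_add, neg_one_mul] at h0
      linarith
    have goal2 : ∑ j, c j * x j ≤ d * t := by
      rcases eq_or_lt_of_le htnn with ht0 | htpos
      · -- t = 0 case
        rw [← ht0, mul_zero]
        by_contra hpos
        push_neg at hpos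
        obtain ⟨x₀, hx₀⟩ := hP
        have hx0d : ∑ j, c j * x₀ j ≤ d := h x₀ hx₀
        set r : ℝ := (d - ∑ j, c j * x₀ j + 1) / (∑ j, c j * x j) with hr
        have hrpos : 0 < r := div_pos (by linarith) hpos
        have hfeas : ∀ i, G.mulVec (x₀ + r • x) i ≤ b i := by
          intro i
          have h1 : G.mulVec (x₀ + r • x) i
              = G.mulVec x₀ i + r * ∑ j, G i j * x j := by
            simp only [Matrix.mulVec, dotProduct, Pi.add_apply, Pi.smul_apply,
              smul_eq_mul, Finset.mul_sum, ← Finset.sum_add_distrib]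
            exact Finset.sum_congr rfl (fun j _ => by ring)
          have h2 : ∑ j, G i j * x j ≤ 0 := by
            have := hrows i; rw [← ht0, mul_zero] at this; exact this
          have h3 : r * ∑ j, G i j * x j ≤ 0 := mul_nonpos_of_nonneg_of_nonpos hrpos.le h2
          rw [h1]; linarith [hx₀ i]
        have h4 := h (x₀ + r • x) hfeas
        have hsum : ∑ j, c j * (x₀ + r • x) j
            = (∑ j, c j * x₀ j) + r * ∑ j, c j * x j := by
          simp only [Pi.add_apply, Pi.smul_apply, smul_eq_mul, Finset.mul_sum,
            ← Finset.sum_add_distrib]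
          exact Finset.sum_congr rfl (fun j _ => by ring)
        rw [hsum, hr, div_mul_cancel₀ _ (ne_of_gt hpos)] at h4
        linarith
      · -- t > 0 case
        have hfeas : ∀ i, G.mulVec (t⁻¹ • x) i ≤ b i := by
          intro i
          have h1 : G.mulVec (t⁻¹ • x) i = t⁻¹ * ∑ j, G i j * x j := by
            simp only [Matrix.mulVec, dotProduct, Pi.smul_apply, smul_eq_mul,
              Finset.mul_sum]
            exact Finset.sum_congr rfl (fun j _ => by ring)
          rw [h1, inv_mul_le_iff₀ htpos, mul_comm]
          exact hrows i
        have h4 := h (t⁻¹ • x) hfeas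
        have hsum : ∑ j, c j * (t⁻¹ • x) j = t⁻¹ * ∑ j, c j * x j := by
          simp only [Pi.smul_apply, smul_eq_mul, Finset.mul_sum]
          exact Finset.sum_congr rfl (fun j _ => by ring)
        rw [hsum, inv_mul_le_iff₀ htpos] at h4
        linarith
    rw [hc', ← hzeq, farkas_inner_snoc]
    linarith
  obtain ⟨y, hy, hyc⟩ := farkas_cone v c' key
  refine ⟨fun i => y (Fin.castSucc i), fun i => hy _, ?_, ?_⟩
  · intro j
    have hco := congrArg (fun w : EuclideanSpace ℝ (Fin (n+1)) => w (Fin.castSucc j)) hyc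
    have hsum : (∑ i, y i • v i) (Fin.castSucc j) = ∑ i, y i * v i (Fin.castSucc j) := by
      rw [WithLp.ofLp_sum, Finset.sum_apply]; rfl
    rw [hsum, Fin.sum_univ_castSucc] at hco
    simp only [hv, hc', PiLp.toLp_apply, Fin.snoc_castSucc, Fin.snoc_last] at hco
    rw [mul_zero, add_zero] at hco
    rw [← hco]
  · have hco := congrArg (fun w : EuclideanSpace ℝ (Fin (n+1)) => w (Fin.last n)) hyc
    have hsum : (∑ i, y i • v i) (Fin.last n) = ∑ i, y i * v i (Fin.last n) := by
      rw [WithLp.ofLp_sum, Finset.sum_apply]; rfl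
    rw [hsum, Fin.sum_univ_castSucc] at hco
    simp only [hv, hc', PiLp.toLp_apply, Fin.snoc_castSucc, Fin.snoc_last] at hco
    have hy' : 0 ≤ y (Fin.last m) := hy _
    have hneg : ∑ i : Fin m, y (Fin.castSucc i) * (-b i)
        = -∑ i : Fin m, y (Fin.castSucc i) * b i := by
      rw [← Finset.sum_neg_distrib]
      exact Finset.sum_congr rfl (fun i _ => by ring)
    rw [hneg] at hco
    have : (-d : ℝ) = -(∑ i : Fin m, y (Fin.castSucc i) * b i) + y (Fin.last m) * (-1) := hco
    simp only []
    linarith [this]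

/-- For `γ > 0` and nonempty `P = {x : Gx ≤ b}`, the existence of
`H` with `H + γI ≥ 0`, `HG = G Ac`, `Hb ≤ 0` is equivalent to
`(I + γ⁻¹ Ac) P ⊆ P`. -/
theorem stmt_12 {m n : ℕ} (G : Matrix (Fin m) (Fin n) ℝ) (b : Fin m → ℝ)
    (Ac : Matrix (Fin n) (Fin n) ℝ) (γ : ℝ) (hγ : 0 < γ)
    (hP : ∃ x : Fin n → ℝ, ∀ i, G.mulVec x i ≤ b i) :
    (∃ H : Matrix (Fin m) (Fin m) ℝ,
      (∀ i j, 0 ≤ (H + γ • (1 : Matrix (Fin m) (Fin m) ℝ)) i j) ∧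
        H * G = G * Ac ∧ ∀ i, H.mulVec b i ≤ 0) ↔
    ∀ x : Fin n → ℝ, (∀ i, G.mulVec x i ≤ b i) →
      ∀ i, G.mulVec (x + γ⁻¹ • Ac.mulVec x) i ≤ b i := by
  have hγ' : γ ≠ 0 := ne_of_gt hγ
  constructor
  · rintro ⟨H, hHpos, hHG, hHb⟩ x hx i
    set u : Fin m → ℝ := G.mulVec x with hu
    have hrw : G.mulVec (x + γ⁻¹ • Ac.mulVec x) i
        = γ⁻¹ * ∑ k, (H + γ • (1 : Matrix (Fin m) (Fin m) ℝ)) i k * u k := by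
      have h1 : G.mulVec (x + γ⁻¹ • Ac.mulVec x) i = u i + γ⁻¹ * H.mulVec u i := by
        rw [Matrix.mulVec_add, Matrix.mulVec_smul]
        have h2 : G.mulVec (Ac.mulVec x) = (G * Ac).mulVec x :=
          Matrix.mulVec_mulVec _ _ _
        have h3 : (G * Ac).mulVec x = H.mulVec u := by
          rw [← hHG, ← Matrix.mulVec_mulVec]
        simp [h2, h3, hu]
      rw [h1]
      have h4 : ∑ k, (H + γ • (1 : Matrix (Fin m) (Fin m) ℝ)) i k * u k
          = (∑ k, H i k * u k) + γ * u i := by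
        simp only [Matrix.add_apply, Matrix.smul_apply, Matrix.one_apply, smul_eq_mul,
          add_mul, Finset.sum_add_distrib]
        congr 1
        rw [Finset.sum_congr rfl (fun k _ => by
          rw [mul_ite, mul_one, mul_zero, ite_mul, zero_mul] : ∀ k ∈ Finset.univ,
          γ * (if i = k then (1:ℝ) else 0) * u k = if i = k then γ * u k else 0)]
        simp
      rw [h4, mul_add, ← mul_assoc, inv_mul_cancel₀ hγ', one_mul]
      rw [Matrix.mulVec, dotProduct]
      ring
    rw [hrw]
    have hle : ∑ k, (H + γ • (1 : Matrix (Fin m) (Fin m) ℝ)) i k * u k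
        ≤ ∑ k, (H + γ • (1 : Matrix (Fin m) (Fin m) ℝ)) i k * b k :=
      Finset.sum_le_sum (fun k _ => mul_le_mul_of_nonneg_left (hx k) (hHpos i k))
    have heq : γ⁻¹ * ∑ k, (H + γ • (1 : Matrix (Fin m) (Fin m) ℝ)) i k * b k
        = γ⁻¹ * H.mulVec b i + b i := by
      have h4 : ∑ k, (H + γ • (1 : Matrix (Fin m) (Fin m) ℝ)) i k * b k
          = (∑ k, H i k * b k) + γ * b i := by
        simp only [Matrix.add_apply, Matrix.smul_apply, Matrix.one_apply, smul_eq_mul,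
          add_mul, Finset.sum_add_distrib]
        congr 1
        rw [Finset.sum_congr rfl (fun k _ => by
          rw [mul_ite, mul_one, mul_zero, ite_mul, zero_mul] : ∀ k ∈ Finset.univ,
          γ * (if i = k then (1:ℝ) else 0) * b k = if i = k then γ * b k else 0)]
        simp
      rw [h4, mul_add, ← mul_assoc, inv_mul_cancel₀ hγ', one_mul]
      rw [Matrix.mulVec, dotProduct]
    have hinv : (0:ℝ) ≤ γ⁻¹ := (inv_nonneg).mpr hγ.le
    have := mul_le_mul_of_nonneg_left hle hinv
    rw [heq] at this
    have hb : γ⁻¹ * H.mulVec b i ≤ 0 :=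
      mul_nonpos_of_nonneg_of_nonpos hinv (hHb i)
    linarith
  · intro hinv
    have hlam : ∀ i : Fin m, ∃ lam : Fin m → ℝ, (∀ k, 0 ≤ lam k) ∧
        (∀ j, ∑ k, lam k * G k j = G i j + γ⁻¹ * (G * Ac) i j) ∧
        ∑ k, lam k * b k ≤ b i := by
      intro i
      apply farkas_affine G b (fun j => G i j + γ⁻¹ * (G * Ac) i j) (b i) hP
      intro x hx
      have h1 : ∑ j, (G i j + γ⁻¹ * (G * Ac) i j) * x j
          = G.mulVec (x + γ⁻¹ • Ac.mulVec x) i := by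
        rw [Matrix.mulVec_add, Matrix.mulVec_smul]
        have h2 : G.mulVec (Ac.mulVec x) = (G * Ac).mulVec x :=
          Matrix.mulVec_mulVec _ _ _
        rw [h2]
        simp only [Pi.add_apply, Pi.smul_apply, smul_eq_mul, Matrix.mulVec, dotProduct,
          Finset.mul_sum, ← Finset.sum_add_distrib]
        exact Finset.sum_congr rfl (fun j _ => by ring)
      rw [h1]
      exact hinv x hx i
    choose lam hlam1 hlam2 hlam3 using hlam
    set L : Matrix (Fin m) (Fin m) ℝ := Matrix.of lam with hL
    refine ⟨γ • (L - 1), ?_, ?_, ?_⟩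
    · intro i j
      have : (γ • (L - 1) + γ • (1 : Matrix (Fin m) (Fin m) ℝ)) i j = γ * L i j := by
        simp only [Matrix.add_apply, Matrix.smul_apply, Matrix.sub_apply, smul_eq_mul]
        ring
      rw [this]
      exact mul_nonneg hγ.le (hlam1 i j)
    · ext i j
      rw [Matrix.mul_apply]
      have h5 : ∑ k, (γ • (L - 1)) i k * G k j
          = γ * ((∑ k, L i k * G k j) - ∑ k, (1 : Matrix (Fin m) (Fin m) ℝ) i k * G k j) := by
        rw [mul_sub, Finset.mul_sum, Finset.mul_sum, ← Finset.sum_sub_distrib]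
        exact Finset.sum_congr rfl (fun k _ => by
          simp only [Matrix.smul_apply, Matrix.sub_apply, smul_eq_mul]; ring)
      have h6 : ∑ k, (1 : Matrix (Fin m) (Fin m) ℝ) i k * G k j = G i j := by
        simp [Matrix.one_apply, ite_mul]
      have h7 : ∑ k, L i k * G k j = G i j + γ⁻¹ * (G * Ac) i j := hlam2 i j
      rw [h5, h6, h7, add_sub_cancel_left, ← mul_assoc, mul_inv_cancel₀ hγ', one_mul]
    · intro i
      have h8 : (γ • (L - 1)).mulVec b i
          = γ * ((∑ k, L i k * b k) - b i) := by
        rw [Matrix.mulVec, dotProduct]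
        have h9 : ∑ k, (1 : Matrix (Fin m) (Fin m) ℝ) i k * b k = b i := by
          simp [Matrix.one_apply, ite_mul]
        rw [← h9, mul_sub, Finset.mul_sum, Finset.mul_sum, ← Finset.sum_sub_distrib]
        exact Finset.sum_congr rfl (fun k _ => by
          simp only [Matrix.smul_apply, Matrix.sub_apply, smul_eq_mul]; ring)
      rw [h8]
      have := hlam3 i
      have h10 : (∑ k, L i k * b k) - b i ≤ 0 := by
        have : ∑ k, L i k * b k ≤ b i := hlam3 i
        linarith
      exact mul_nonpos_of_nonneg_of_nonpos hγ.le h10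
end

section
/- Let G ∈ ℝ^{m×n}, b ∈ ℝ^m, A_c ∈ ℝ^{n×n}, and suppose there exists a matrix H ∈ ℝ^{m×m} with all off-diagonal entries nonnegative such that HG = GA_c and Hb ≤ 0. Then the polyhedron P = {x ∈ ℝⁿ : Gx ≤ b} is an invariant set for the continuous system ẋ = A_c x; that is, for every t ≥ 0 and every x ∈ ℝⁿ with Gx ≤ b, we have G·exp(t·A_c)·x ≤ b. -/
open NormedSpace
open scoped Nat

attribute [local instance] Matrix.linftyOpNormedAddCommGroup Matrix.linftyOpNormedSpace
  Matrix.linftyOpNormedRing Matrix.linftyOpNormedAlgebra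

section aux

variable {m n : ℕ}

/-- Right multiplication by a fixed rectangular matrix as a CLM. -/
noncomputable def mulRightCLM (G : Matrix (Fin m) (Fin n) ℝ) :
    Matrix (Fin m) (Fin m) ℝ →L[ℝ] Matrix (Fin m) (Fin n) ℝ :=
  LinearMap.toContinuousLinearMap
    { toFun := fun M => M * G
      map_add' := fun A B => Matrix.add_mul A B G
      map_smul' := fun c A => Matrix.smul_mul c A G }

@[simp] lemma mulRightCLM_apply (G : Matrix (Fin m) (Fin n) ℝ)
    (M : Matrix (Fin m) (Fin m) ℝ) : mulRightCLM G M = M * G := rfl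

noncomputable def mulLeftCLM (G : Matrix (Fin m) (Fin n) ℝ) :
    Matrix (Fin n) (Fin n) ℝ →L[ℝ] Matrix (Fin m) (Fin n) ℝ :=
  LinearMap.toContinuousLinearMap
    { toFun := fun M => G * M
      map_add' := fun A B => Matrix.mul_add G A B
      map_smul' := fun c A => Matrix.mul_smul G c A }

@[simp] lemma mulLeftCLM_apply (G : Matrix (Fin m) (Fin n) ℝ)
    (M : Matrix (Fin n) (Fin n) ℝ) : mulLeftCLM G M = G * M := rfl

/-- entry as a CLM -/
noncomputable def entryCLM (i : Fin m) (j : Fin n) :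
    Matrix (Fin m) (Fin n) ℝ →L[ℝ] ℝ :=
  LinearMap.toContinuousLinearMap
    { toFun := fun M => M i j
      map_add' := fun _ _ => rfl
      map_smul' := fun _ _ => rfl }

@[simp] lemma entryCLM_apply (i : Fin m) (j : Fin n) (M : Matrix (Fin m) (Fin n) ℝ) :
    entryCLM i j M = M i j := rfl

/-- mulVec applied component as CLM -/
noncomputable def mulVecCLM (b : Fin m → ℝ) (i : Fin m) :
    Matrix (Fin m) (Fin m) ℝ →L[ℝ] ℝ :=
  LinearMap.toContinuousLinearMap
    { toFun := fun M => M.mulVec b i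
      map_add' := fun A B => by simp [Matrix.add_mulVec]
      map_smul' := fun c A => by simp [Matrix.smul_mulVec] }

@[simp] lemma mulVecCLM_apply (b : Fin m → ℝ) (i : Fin m) (M : Matrix (Fin m) (Fin m) ℝ) :
    mulVecCLM b i M = M.mulVec b i := rfl

lemma pow_entries_nonneg {N : Matrix (Fin m) (Fin m) ℝ} (h : ∀ i j, 0 ≤ N i j) :
    ∀ k i j, 0 ≤ (N ^ k) i j := by
  intro k
  induction k with
  | zero => intro i j; by_cases hij : i = j <;> simp [Matrix.one_apply, hij]
  | succ k ih =>
    intro i j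
    rw [pow_succ, Matrix.mul_apply]
    exact Finset.sum_nonneg fun l _ => mul_nonneg (ih i l) (h l j)

lemma exp_entries_nonneg {N : Matrix (Fin m) (Fin m) ℝ} (h : ∀ i j, 0 ≤ N i j) :
    ∀ i j, 0 ≤ (exp N) i j := by
  intro i j
  have hs := (expSeries_summable' (𝕂 := ℝ) N).hasSum
  have hmap := (hs.mapL (entryCLM i j)).tsum_eq
  have hexp : exp N = ∑' k : ℕ, (k !⁻¹ : ℝ) • N ^ k := by
    rw [exp_eq_tsum ℝ]
  rw [hexp]
  show 0 ≤ (entryCLM i j) (∑' k : ℕ, (k !⁻¹ : ℝ) • N ^ k)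
  erw [← hmap]
  refine tsum_nonneg fun k => ?_
  simp only [Function.comp, entryCLM_apply, Matrix.smul_apply, smul_eq_mul]
  exact mul_nonneg (by positivity) (pow_entries_nonneg h k i j)

lemma exp_smul_one (c : ℝ) :
    exp (c • (1 : Matrix (Fin m) (Fin m) ℝ)) = Real.exp c • 1 := by
  erw [show (c • (1 : Matrix (Fin m) (Fin m) ℝ)) = algebraMap ℝ _ c from
      (Algebra.algebraMap_eq_smul_one c).symm,
    ← map_exp (algebraMap ℝ (Matrix (Fin m) (Fin m) ℝ)) (continuous_algebraMap _ _),
    Algebra.algebraMap_eq_smul_one, Real.exp_eq_exp_ℝ]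

lemma exp_add_smul_one (A : Matrix (Fin m) (Fin m) ℝ) (c : ℝ) :
    exp (A + c • (1 : Matrix (Fin m) (Fin m) ℝ)) = Real.exp c • exp A := by
  have hc : Commute A (c • (1 : Matrix (Fin m) (Fin m) ℝ)) :=
    (Commute.one_right A).smul_right c
  erw [exp_add_of_commute hc, exp_smul_one, mul_smul_comm, mul_one]
  rfl

lemma exp_metzler_nonneg {H : Matrix (Fin m) (Fin m) ℝ}
    (hmetz : ∀ i j, i ≠ j → 0 ≤ H i j) {t : ℝ} (ht : 0 ≤ t) :
    ∀ i j, 0 ≤ (exp (t • H)) i j := by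
  intro i j
  set c : ℝ := ∑ l : Fin m, |t * H l l| with hc
  have hcn : ∀ l : Fin m, |t * H l l| ≤ c := fun l =>
    Finset.single_le_sum (f := fun l => |t * H l l|) (fun _ _ => abs_nonneg _)
      (Finset.mem_univ l)
  set N : Matrix (Fin m) (Fin m) ℝ := t • H + c • 1 with hN
  have hNnn : ∀ i j, 0 ≤ N i j := by
    intro a b
    by_cases hab : a = b
    · subst hab
      simp only [hN, Matrix.add_apply, Matrix.smul_apply, Matrix.one_apply_eq, smul_eq_mul,
        mul_one]
      have := neg_abs_le (t * H a a)
      linarith [hcn a]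
    · simp only [hN, Matrix.add_apply, Matrix.smul_apply, Matrix.one_apply_ne hab, smul_eq_mul,
        mul_zero, add_zero]
      exact mul_nonneg ht (hmetz a b hab)
  have key : exp N = Real.exp c • exp (t • H) := exp_add_smul_one (t • H) c
  have h1 : (exp N) i j = Real.exp c * (exp (t • H)) i j := by
    rw [key]; simp
  have h2 : 0 ≤ (exp N) i j := exp_entries_nonneg hNnn i j
  nlinarith [Real.exp_pos c, h2, h1]

lemma intertwine {B : Matrix (Fin m) (Fin m) ℝ} {C : Matrix (Fin n) (Fin n) ℝ}
    {G : Matrix (Fin m) (Fin n) ℝ} (h : B * G = G * C) :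
    exp B * G = G * exp C := by
  have hpow : ∀ k : ℕ, B ^ k * G = G * C ^ k := by
    intro k
    induction k with
    | zero => simp
    | succ k ih =>
      rw [pow_succ, pow_succ, Matrix.mul_assoc, h, ← Matrix.mul_assoc, ih, Matrix.mul_assoc]
  have hsB := (expSeries_summable' (𝕂 := ℝ) B).hasSum
  have hsC := (expSeries_summable' (𝕂 := ℝ) C).hasSum
  have hB := (hsB.mapL (mulRightCLM G)).tsum_eq
  have hC := (hsC.mapL (mulLeftCLM G)).tsum_eq
  have hexpB : exp B = ∑' k : ℕ, (k !⁻¹ : ℝ) • B ^ k := by rw [exp_eq_tsum ℝ]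
  have hexpC : exp C = ∑' k : ℕ, (k !⁻¹ : ℝ) • C ^ k := by rw [exp_eq_tsum ℝ]
  calc exp B * G = mulRightCLM G (exp B) := rfl
    _ = ∑' k : ℕ, mulRightCLM G ((k !⁻¹ : ℝ) • B ^ k) := by erw [hexpB, ← hB]
    _ = ∑' k : ℕ, mulLeftCLM G ((k !⁻¹ : ℝ) • C ^ k) := by
        congr 1; funext k
        simp only [mulRightCLM_apply, mulLeftCLM_apply]
        rw [Matrix.smul_mul, Matrix.mul_smul, hpow k]
    _ = mulLeftCLM G (exp C) := by erw [hexpC, ← hC]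
    _ = G * exp C := rfl

lemma exp_mulVec_le {H : Matrix (Fin m) (Fin m) ℝ} {b : Fin m → ℝ}
    (hmetz : ∀ i j, i ≠ j → 0 ≤ H i j) (hb : ∀ i, H.mulVec b i ≤ 0)
    {t : ℝ} (ht : 0 ≤ t) (i : Fin m) :
    (exp (t • H)).mulVec b i ≤ b i := by
  set f : ℝ → ℝ := fun s => (exp (s • H)).mulVec b i with hf
  have hderiv : ∀ s : ℝ, HasDerivAt f ((exp (s • H)).mulVec (H.mulVec b) i) s := by
    intro s
    have h1 : HasDerivAt (fun u : ℝ => exp (u • H)) (exp (s • H) * H) s :=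
      hasDerivAt_exp_smul_const H s
    have h2 := ((mulVecCLM b i).hasFDerivAt.comp_hasDerivAt s h1)
    have h3 : (mulVecCLM b i) (exp (s • H) * H) = (exp (s • H)).mulVec (H.mulVec b) i := by
      rw [mulVecCLM_apply, ← Matrix.mulVec_mulVec]
    erw [h3] at h2
    exact h2
  have hnonpos : ∀ s : ℝ, 0 ≤ s → (exp (s • H)).mulVec (H.mulVec b) i ≤ 0 := by
    intro s hs
    unfold Matrix.mulVec
    refine Finset.sum_nonpos fun j _ => ?_
    exact mul_nonpos_of_nonneg_of_nonpos (exp_metzler_nonneg hmetz hs i j) (hb j)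
  have hanti : AntitoneOn f (Set.Ici (0 : ℝ)) := by
    refine antitoneOn_of_deriv_nonpos (convex_Ici 0) ?_ ?_ ?_
    · exact fun s _ => (hderiv s).continuousAt.continuousWithinAt
    · intro s hs
      exact (hderiv s).differentiableAt.differentiableWithinAt
    · intro s hs
      rw [(hderiv s).deriv]
      exact hnonpos s (le_of_lt (by simpa using hs))
  have h0 : f 0 = b i := by
    simp [hf, exp_zero]
  have := hanti (Set.self_mem_Ici) (Set.mem_Ici.mpr ht) ht
  rw [h0] at this
  exact this

end aux

/-- If there is an off-diagonal nonnegative `H` with `HG = G Ac`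
and `Hb ≤ 0`, then the polyhedron `{x : Gx ≤ b}` is invariant for the
continuous system `ẋ = Ac x`: for every `t ≥ 0`, `Gx ≤ b` implies
`G (exp(t Ac) x) ≤ b`. -/
theorem stmt_14 {m n : ℕ} (G : Matrix (Fin m) (Fin n) ℝ) (b : Fin m → ℝ)
    (Ac : Matrix (Fin n) (Fin n) ℝ)
    (hH : ∃ H : Matrix (Fin m) (Fin m) ℝ,
      (∀ i j, i ≠ j → 0 ≤ H i j) ∧ H * G = G * Ac ∧ ∀ i, H.mulVec b i ≤ 0) :
    ∀ t : ℝ, 0 ≤ t → ∀ x : Fin n → ℝ, (∀ i, G.mulVec x i ≤ b i) →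
      ∀ i, G.mulVec ((NormedSpace.exp (t • Ac)).mulVec x) i ≤ b i := by
  obtain ⟨H, hmetz, hcomm, hb⟩ := hH
  intro t ht x hx i
  have hsc : (t • H) * G = G * (t • Ac) := by
    rw [Matrix.smul_mul, Matrix.mul_smul, hcomm]
  have hkey : exp (t • H) * G = G * exp (t • Ac) := intertwine hsc
  have h1 : G.mulVec ((exp (t • Ac)).mulVec x) = (exp (t • H)).mulVec (G.mulVec x) := by
    rw [Matrix.mulVec_mulVec, Matrix.mulVec_mulVec, hkey]
  rw [h1]
  have hE := exp_metzler_nonneg hmetz ht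
  have h2 : (exp (t • H)).mulVec (G.mulVec x) i ≤ (exp (t • H)).mulVec b i := by
    unfold Matrix.mulVec
    exact Finset.sum_le_sum fun j _ => mul_le_mul_of_nonneg_left (hx j) (hE i j)
  exact h2.trans (exp_mulVec_le hmetz hb ht i)
end

section
/- Let x¹, x², ..., x^ℓ ∈ ℝⁿ, let P = conv{x¹, ..., x^ℓ}, and let A_c ∈ ℝ^{n×n}. Suppose for each i ∈ {1,...,ℓ} there exist γ_j^{(i)} ≥ 0 (j ≠ i) such that A_c·xⁱ = Σ_{j≠i} γ_j^{(i)}·(x^j − xⁱ) and Σ_{j≠i} γ_j^{(i)} > 0, and set εⁱ = (Σ_{j≠i} γ_j^{(i)})^{-1} and τ = min_{i=1,...,ℓ} εⁱ. Then for every Δt ∈ [0, τ] and every x ∈ P, we have x + Δt·A_c·x ∈ P; that is, the forward Euler method is invariance preserving on P for all steplengths in [0, τ]. -/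
/-- Largest steplength threshold for the forward Euler method on a
polytope `P = conv{x¹, ..., x^ℓ}`. If for each vertex `xⁱ` we have
`Ac xⁱ = ∑_{j ≠ i} γⱼ⁽ⁱ⁾ (xʲ − xⁱ)` with `γⱼ⁽ⁱ⁾ ≥ 0` and `∑_{j ≠ i} γⱼ⁽ⁱ⁾ > 0`,
then with `εⁱ = (∑_{j ≠ i} γⱼ⁽ⁱ⁾)⁻¹` and `τ = minᵢ εⁱ`, for every `Δt ∈ [0, τ]`
and every `y ∈ P` we have `y + Δt Ac y ∈ P`. -/
theorem stmt_16 {n ℓ : ℕ} (hℓ : 0 < ℓ) (x : Fin ℓ → (Fin n → ℝ))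
    (Ac : Matrix (Fin n) (Fin n) ℝ) (γ : Fin ℓ → Fin ℓ → ℝ)
    (hγ : ∀ i j, j ≠ i → 0 ≤ γ i j)
    (hAc : ∀ i, Ac.mulVec (x i) = ∑ j ∈ Finset.univ.erase i, γ i j • (x j - x i))
    (hpos : ∀ i, 0 < ∑ j ∈ Finset.univ.erase i, γ i j) :
    ∀ Δt ∈ Set.Icc (0 : ℝ)
        (Finset.univ.inf' (Finset.univ_nonempty_iff.mpr ⟨⟨0, hℓ⟩⟩)
          fun i => (∑ j ∈ Finset.univ.erase i, γ i j)⁻¹),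
      ∀ y ∈ convexHull ℝ (Set.range x),
        y + Δt • Ac.mulVec y ∈ convexHull ℝ (Set.range x) := by
  intro Δt hΔt y hy
  obtain ⟨h0, hτ⟩ := hΔt
  set f : (Fin n → ℝ) →ₗ[ℝ] (Fin n → ℝ) :=
    LinearMap.id + Δt • Ac.mulVecLin with hf
  have hfy : ∀ z, f z = z + Δt • Ac.mulVec z := by
    intro z; simp [hf]
  have key : convexHull ℝ (Set.range x) ⊆ f ⁻¹' (convexHull ℝ (Set.range x)) := by
    apply convexHull_min
    · rintro _ ⟨i, rfl⟩
      simp only [Set.mem_preimage, hfy]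
      have hs := hpos i
      set s : ℝ := ∑ j ∈ Finset.univ.erase i, γ i j with hsdef
      have hΔs : Δt * s ≤ 1 := by
        have h1 : Δt ≤ s⁻¹ := le_trans hτ (Finset.inf'_le _ (Finset.mem_univ i))
        have h2 : Δt * s ≤ s⁻¹ * s := by nlinarith
        rwa [inv_mul_cancel₀ hs.ne'] at h2
      have hw : ∀ j ∈ (Finset.univ : Finset (Fin ℓ)),
          (0:ℝ) ≤ (if j = i then 1 - Δt * s else Δt * γ i j) := by
        intro j _
        split
        · linarith
        · exact mul_nonneg h0 (hγ i j (by assumption))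
      have hsum : ∑ j ∈ (Finset.univ : Finset (Fin ℓ)),
          (if j = i then 1 - Δt * s else Δt * γ i j) = 1 := by
        rw [← Finset.add_sum_erase _ _ (Finset.mem_univ i), if_pos rfl]
        have : ∑ j ∈ Finset.univ.erase i, (if j = i then 1 - Δt * s else Δt * γ i j)
            = ∑ j ∈ Finset.univ.erase i, Δt * γ i j := by
          apply Finset.sum_congr rfl
          intro j hj
          rw [if_neg (Finset.ne_of_mem_erase hj)]
        rw [this, ← Finset.mul_sum, ← hsdef]
        ring
      have hmem : ∑ j ∈ (Finset.univ : Finset (Fin ℓ)),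
          (if j = i then 1 - Δt * s else Δt * γ i j) • x j ∈ convexHull ℝ (Set.range x) :=
        (convex_convexHull ℝ (Set.range x)).sum_mem hw hsum
          (fun j _ => subset_convexHull ℝ _ ⟨j, rfl⟩)
      have heq : x i + Δt • Ac.mulVec (x i)
          = ∑ j ∈ (Finset.univ : Finset (Fin ℓ)),
              (if j = i then 1 - Δt * s else Δt * γ i j) • x j := by
        rw [← Finset.add_sum_erase _ _ (Finset.mem_univ i), if_pos rfl]
        have h3 : ∑ j ∈ Finset.univ.erase i,
            (if j = i then 1 - Δt * s else Δt * γ i j) • x j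
            = ∑ j ∈ Finset.univ.erase i, (Δt * γ i j) • x j := by
          apply Finset.sum_congr rfl
          intro j hj
          rw [if_neg (Finset.ne_of_mem_erase hj)]
        rw [h3, hAc i, Finset.smul_sum]
        simp only [smul_sub, smul_smul, Finset.sum_sub_distrib, ← Finset.sum_smul,
          ← Finset.mul_sum, ← hsdef, sub_smul, one_smul]
        abel
      rw [heq]
      exact hmem
    · exact (convex_convexHull ℝ (Set.range x)).linear_preimage f
  have := key hy
  rw [Set.mem_preimage, hfy] at this
  exact this
end

section
/- Let x¹, x², ..., x^ℓ ∈ ℝⁿ, A_c ∈ ℝ^{n×n}, fix i ∈ {1,...,ℓ}, and let Δt > 0. Then xⁱ + Δt·A_c·xⁱ belongs to the convex hull of {x¹, ..., x^ℓ} if and only if there exist γ_j ≥ 0 for j ≠ i such that A_c·xⁱ = Σ_{j≠i} γ_j·(x^j − xⁱ) and Δt·Σ_{j≠i} γ_j ≤ 1. (This is the equivalence between the two linear optimization formulations for the largest invariance preserving forward Euler steplength at the vertex xⁱ.) -/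
lemma mem_convexHull_range_iff' {ℓ E : Type*} [Fintype ℓ] [AddCommGroup E] [Module ℝ E]
    (v : ℓ → E) (p : E) :
    p ∈ convexHull ℝ (Set.range v) ↔
      ∃ w : ℓ → ℝ, (∀ j, 0 ≤ w j) ∧ ∑ j, w j = 1 ∧ ∑ j, w j • v j = p := by
  classical
  rw [convexHull_range_eq_exists_affineCombination]
  constructor
  · rintro ⟨s, w, hw0, hw1, rfl⟩
    refine ⟨fun j => if j ∈ s then w j else 0, fun j => ?_, ?_, ?_⟩
    · dsimp only; split <;> [exact hw0 _ ‹_›; rfl]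
    · dsimp only; rw [Finset.sum_ite_mem, Finset.univ_inter, hw1]
    · dsimp only
      rw [Finset.affineCombination_eq_linear_combination s v w hw1]
      simp [ite_smul, Finset.sum_ite_mem]
  · rintro ⟨w, hw0, hw1, rfl⟩
    exact ⟨Finset.univ, w, fun j _ => hw0 j, hw1,
      Finset.affineCombination_eq_linear_combination _ v w hw1⟩

/-- For `Δt > 0`, the point `xⁱ + Δt Ac xⁱ` belongs to
`conv{x¹, ..., x^ℓ}` if and only if there exist `γⱼ ≥ 0` (for `j ≠ i`) with
`Ac xⁱ = ∑_{j ≠ i} γⱼ (xʲ − xⁱ)` and `Δt ∑_{j ≠ i} γⱼ ≤ 1`. -/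
theorem stmt_17 {n ℓ : ℕ} (x : Fin ℓ → (Fin n → ℝ))
    (Ac : Matrix (Fin n) (Fin n) ℝ) (i : Fin ℓ) (Δt : ℝ) (hΔt : 0 < Δt) :
    x i + Δt • Ac.mulVec (x i) ∈ convexHull ℝ (Set.range x) ↔
    ∃ γ : Fin ℓ → ℝ, (∀ j, j ≠ i → 0 ≤ γ j) ∧
      Ac.mulVec (x i) = ∑ j ∈ Finset.univ.erase i, γ j • (x j - x i) ∧
      Δt * ∑ j ∈ Finset.univ.erase i, γ j ≤ 1 := by
  rw [mem_convexHull_range_iff']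
  constructor
  · rintro ⟨w, hw0, hw1, hwx⟩
    refine ⟨fun j => Δt⁻¹ * w j, fun j _ => mul_nonneg (inv_nonneg.2 hΔt.le) (hw0 j), ?_, ?_⟩
    · have key : ∑ j ∈ Finset.univ.erase i, w j • (x j - x i) = Δt • Ac.mulVec (x i) := by
        have : ∑ j, w j • (x j - x i) = Δt • Ac.mulVec (x i) := by
          simp only [smul_sub, Finset.sum_sub_distrib, hwx, ← Finset.sum_smul, hw1, one_smul]
          abel
        rw [← this, ← Finset.add_sum_erase _ _ (Finset.mem_univ i)]
        simp
      have := congrArg (fun z => (Δt⁻¹ : ℝ) • z) key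
      simp only [Finset.smul_sum, smul_smul, inv_mul_cancel₀ hΔt.ne', one_smul] at this
      exact this.symm
    · rw [Finset.mul_sum]
      simp only [mul_inv_cancel_left₀ hΔt.ne']
      have h2 : ∑ j ∈ Finset.univ.erase i, w j ≤ ∑ j, w j :=
        Finset.sum_le_sum_of_subset_of_nonneg (Finset.subset_univ _) (fun j _ _ => hw0 j)
      linarith [hw1 ▸ h2]
  · rintro ⟨γ, hγ0, hAc, hsum⟩
    set u : Fin ℓ → ℝ :=
      Function.update (fun j => Δt * γ j) i (1 - Δt * ∑ k ∈ Finset.univ.erase i, γ k) with hu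
    have hui : u i = 1 - Δt * ∑ k ∈ Finset.univ.erase i, γ k := Function.update_self ..
    have hun : ∀ j, j ≠ i → u j = Δt * γ j := fun j hj => Function.update_of_ne hj ..
    refine ⟨u, fun j => ?_, ?_, ?_⟩
    · by_cases hj : j = i
      · rw [hj, hui]; linarith
      · rw [hun j hj]; exact mul_nonneg hΔt.le (hγ0 j hj)
    · have h2 : ∑ j ∈ Finset.univ.erase i, u j = Δt * ∑ j ∈ Finset.univ.erase i, γ j := by
        rw [Finset.mul_sum]
        exact Finset.sum_congr rfl fun j hj => hun j (Finset.ne_of_mem_erase hj)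
      rw [← Finset.add_sum_erase _ _ (Finset.mem_univ i), hui, h2]
      ring
    · have h3 : ∑ j ∈ Finset.univ.erase i, u j • x j
          = ∑ j ∈ Finset.univ.erase i, (Δt * γ j) • x j :=
        Finset.sum_congr rfl fun j hj => by rw [hun j (Finset.ne_of_mem_erase hj)]
      rw [← Finset.add_sum_erase _ _ (Finset.mem_univ i), hui, h3, hAc, Finset.smul_sum]
      simp only [smul_smul, smul_sub]
      rw [Finset.sum_sub_distrib, ← Finset.sum_smul, ← Finset.mul_sum, sub_smul, one_smul]
      abel
end
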